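/- arXiv:1512.06439 — 6 statements merged into one kernel-verified Lean document; each statement's English description precedes it below -/
import Mathlib

section
/- Every cycle in the unweighted diamond graph D_n has length 2^j for some integer j with 2 ≤ j ≤ n + 1; in particular, the length of every cycle in D_n is a power of 2. -/
/-- A graph given by a set of oriented edges. -/
structure EGraph where
  V : Type
  E : Type
  src : E → V
  tgt : E → V

/-- The diamond graphs `D_n`: `D_0` is a single edge, and `D_{n+1}` is obtained from
`D_n` by replacing each edge `uv` by a quadrilateral `u, a, v, b` (two new vertices
per edge, encoded as `(e, false)` and `(e, true)`). -/
def diamond : ℕ → EGraph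
  | 0 => { V := Bool, E := Unit, src := fun _ => false, tgt := fun _ => true }
  | n + 1 =>
    let G := diamond n
    { V := G.V ⊕ (G.E × Bool)
      E := G.E × Fin 4
      src := fun p =>
        if p.2.val = 0 then Sum.inl (G.src p.1)
        else if p.2.val = 1 then Sum.inr (p.1, false)
        else if p.2.val = 2 then Sum.inl (G.src p.1)
        else Sum.inr (p.1, true)
      tgt := fun p =>
        if p.2.val = 0 then Sum.inr (p.1, false)
        else if p.2.val = 1 then Sum.inl (G.tgt p.1)
        else if p.2.val = 2 then Sum.inr (p.1, true)
        else Sum.inl (G.tgt p.1) }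

/-- The Laakso graphs `L_n`: `L_0` is a single edge, and `L_{n+1}` is obtained from `L_n`
by replacing each edge `uv` by a copy of the pattern graph `L_1`.  In the pattern with
endpoints `u, v` and internal vertices `a = 0, b = 1, c = 2, d = 3` (encoded as
`(e, 0), …, (e, 3)`), the six edges are `u-a, a-b, a-c, b-d, c-d, d-v`. -/
def laakso : ℕ → EGraph
  | 0 => { V := Bool, E := Unit, src := fun _ => false, tgt := fun _ => true }
  | n + 1 =>
    let G := laakso n
    { V := G.V ⊕ (G.E × Fin 4)
      E := G.E × Fin 6
      src := fun p =>
        if p.2.val = 0 then Sum.inl (G.src p.1)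
        else if p.2.val = 1 then Sum.inr (p.1, 0)
        else if p.2.val = 2 then Sum.inr (p.1, 0)
        else if p.2.val = 3 then Sum.inr (p.1, 1)
        else if p.2.val = 4 then Sum.inr (p.1, 2)
        else Sum.inr (p.1, 3)
      tgt := fun p =>
        if p.2.val = 0 then Sum.inr (p.1, 0)
        else if p.2.val = 1 then Sum.inr (p.1, 1)
        else if p.2.val = 2 then Sum.inr (p.1, 2)
        else if p.2.val = 3 then Sum.inr (p.1, 3)
        else if p.2.val = 4 then Sum.inr (p.1, 3)
        else Sum.inl (G.tgt p.1) }

/-- The simple graph underlying an `EGraph`. -/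
def EGraph.toSimpleGraph (G : EGraph) : SimpleGraph G.V where
  Adj u v := u ≠ v ∧ ∃ e, (G.src e = u ∧ G.tgt e = v) ∨ (G.src e = v ∧ G.tgt e = u)
  symm := ⟨fun _ _ h => ⟨Ne.symm h.1, h.2.elim fun e he => ⟨e, he.symm⟩⟩⟩
  loopless := ⟨fun _ h => h.1 rfl⟩

/-- The unweighted diamond graph `D_n`; its shortest path metric is
`(DiamondGraph n).dist`. -/
abbrev DiamondGraph (n : ℕ) : SimpleGraph (diamond n).V := (diamond n).toSimpleGraph

/-- The unweighted Laakso graph `L_n`; its shortest path metric is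
`(LaaksoGraph n).dist`. -/
abbrev LaaksoGraph (n : ℕ) : SimpleGraph (laakso n).V := (laakso n).toSimpleGraph

/-- A cycle in a graph: a connected subgraph in which every vertex has degree `2`. -/
def IsCycleSubgraph {V : Type} {G : SimpleGraph V} (H : G.Subgraph) : Prop :=
  H.Connected ∧ ∀ v ∈ H.verts, (H.neighborSet v).ncard = 2


lemma diamond_finite : ∀ n : ℕ, Finite (diamond n).V ∧ Finite (diamond n).E
  | 0 => ⟨inferInstanceAs (Finite Bool), inferInstanceAs (Finite Unit)⟩
  | n + 1 => by
    obtain ⟨h1, h2⟩ := diamond_finite n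
    exact ⟨inferInstanceAs (Finite ((diamond n).V ⊕ ((diamond n).E × Bool))),
      inferInstanceAs (Finite ((diamond n).E × Fin 4))⟩

instance (n : ℕ) : Finite (diamond n).V := (diamond_finite n).1
instance (n : ℕ) : Finite (diamond n).E := (diamond_finite n).2

lemma diamond_src_ne_tgt : ∀ (n : ℕ) (e : (diamond n).E), (diamond n).src e ≠ (diamond n).tgt e
  | 0, _ => by simp [diamond]
  | n + 1, ⟨e, i⟩ => by
    rcases i with ⟨i, hi⟩
    interval_cases i <;> simp +decide [diamond]

lemma EGraph.adj_iff {G : EGraph} {u v : G.V} :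
    G.toSimpleGraph.Adj u v ↔ u ≠ v ∧ ∃ e, (G.src e = u ∧ G.tgt e = v) ∨ (G.src e = v ∧ G.tgt e = u) :=
  Iff.rfl

lemma adj_succ_cases {n : ℕ} {x y : (diamond (n+1)).V}
    (h : (DiamondGraph (n+1)).Adj x y) :
    ∃ (e : (diamond n).E) (b : Bool) (u : (diamond n).V),
      ((diamond n).src e = u ∨ (diamond n).tgt e = u) ∧
      ((x = Sum.inl u ∧ y = Sum.inr (e, b)) ∨ (x = Sum.inr (e, b) ∧ y = Sum.inl u)) := by
  rw [EGraph.adj_iff] at h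
  obtain ⟨-, ⟨e, i⟩, h⟩ := h
  rcases i with ⟨i, hi⟩
  interval_cases i <;>
    simp +decide [diamond] at h <;>
    rcases h with ⟨h1, h2⟩ | ⟨h1, h2⟩ <;> subst h1 <;> subst h2 <;>
    first
    | exact ⟨e, false, _, Or.inl rfl, Or.inl ⟨rfl, rfl⟩⟩
    | exact ⟨e, false, _, Or.inl rfl, Or.inr ⟨rfl, rfl⟩⟩
    | exact ⟨e, false, _, Or.inr rfl, Or.inl ⟨rfl, rfl⟩⟩
    | exact ⟨e, false, _, Or.inr rfl, Or.inr ⟨rfl, rfl⟩⟩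
    | exact ⟨e, true, _, Or.inl rfl, Or.inl ⟨rfl, rfl⟩⟩
    | exact ⟨e, true, _, Or.inl rfl, Or.inr ⟨rfl, rfl⟩⟩
    | exact ⟨e, true, _, Or.inr rfl, Or.inl ⟨rfl, rfl⟩⟩
    | exact ⟨e, true, _, Or.inr rfl, Or.inr ⟨rfl, rfl⟩⟩

lemma adj_succ_mk {n : ℕ} (e : (diamond n).E) (b : Bool) (u : (diamond n).V)
    (hu : (diamond n).src e = u ∨ (diamond n).tgt e = u) :
    (DiamondGraph (n+1)).Adj (Sum.inl u) (Sum.inr (e, b)) := by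
  refine EGraph.adj_iff.mpr ?_
  refine ⟨Sum.inl_ne_inr, ?_⟩
  rcases hu with hu | hu <;> rcases b with _ | _
  · exact ⟨(e, 0), Or.inl (by simp +decide [diamond, hu])⟩
  · exact ⟨(e, 2), Or.inl (by simp +decide [diamond, hu])⟩
  · exact ⟨(e, 1), Or.inr (by simp +decide [diamond, hu])⟩
  · exact ⟨(e, 3), Or.inr (by simp +decide [diamond, hu])⟩

lemma adj_inl_inr {n : ℕ} {u : (diamond n).V} {e : (diamond n).E} {b : Bool}
    (h : (DiamondGraph (n+1)).Adj (Sum.inl u) (Sum.inr (e, b))) :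
    (diamond n).src e = u ∨ (diamond n).tgt e = u := by
  obtain ⟨e', b', u', hu', h'⟩ := adj_succ_cases h
  rcases h' with ⟨h1, h2⟩ | ⟨h1, h2⟩
  · obtain rfl : u = u' := by injection h1
    obtain ⟨rfl, rfl⟩ : e = e' ∧ b = b' := by
      have := Sum.inr.inj h2; exact ⟨congrArg Prod.fst this, congrArg Prod.snd this⟩
    exact hu'
  · exact absurd h1 (by simp)

lemma diamond_edge_ext : ∀ (n : ℕ) (e e' : (diamond n).E),
    ((diamond n).src e = (diamond n).src e' ∧ (diamond n).tgt e = (diamond n).tgt e') ∨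
    ((diamond n).src e = (diamond n).tgt e' ∧ (diamond n).tgt e = (diamond n).src e') →
    e = e'
  | 0, _, _, _ => rfl
  | n + 1, ⟨a, i⟩, ⟨b, j⟩, h => by
    rcases i with ⟨i, hi⟩; rcases j with ⟨j, hj⟩
    interval_cases i <;> interval_cases j <;>
      simp +decide [diamond, Prod.ext_iff] at h ⊢ <;>
      first
      | exact h.2
      | exact h.1
      | (obtain ⟨h1, rfl⟩ := h; exact absurd h1 (diamond_src_ne_tgt n _))
      | (obtain ⟨rfl, h1⟩ := h; exact absurd h1.symm (diamond_src_ne_tgt n _))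

lemma nbr_pair {V : Type} [Finite V] {s : Set V} {x y : V} (hxy : x ≠ y)
    (hs : s.ncard = 2) (hx : x ∈ s) (hy : y ∈ s) : s = {x, y} :=
  (Set.eq_of_subset_of_ncard_le (by rintro z (rfl | rfl) <;> assumption)
    (by rw [hs, Set.ncard_pair hxy]) (Set.toFinite s)).symm

lemma nbr_pair' {V : Type} [Finite V] {s : Set V} {x y : V} (hxy : x ≠ y)
    (hs : s.ncard = 2) (hsub : s ⊆ {x, y}) : s = {x, y} :=
  Set.eq_of_subset_of_ncard_le hsub (by rw [hs, Set.ncard_pair hxy]) (Set.toFinite _)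

section Succ

variable {n : ℕ} {C : (DiamondGraph (n+1)).Subgraph}

lemma inr_adj (hC : IsCycleSubgraph C) {e : (diamond n).E} {b : Bool}
    (h : Sum.inr (e, b) ∈ C.verts) :
    C.Adj (Sum.inr (e, b)) (Sum.inl ((diamond n).src e)) ∧
    C.Adj (Sum.inr (e, b)) (Sum.inl ((diamond n).tgt e)) := by
  have hne : (Sum.inl ((diamond n).src e) : (diamond (n+1)).V) ≠ Sum.inl ((diamond n).tgt e) := by
    simp [diamond_src_ne_tgt n e]
  have hsub : C.neighborSet (Sum.inr (e, b)) ⊆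
      {Sum.inl ((diamond n).src e), Sum.inl ((diamond n).tgt e)} := by
    intro x hx
    obtain ⟨e', b', u', hu', h'⟩ := adj_succ_cases (C.adj_sub hx)
    rcases h' with ⟨h1, h2⟩ | ⟨h1, h2⟩
    · exact absurd h1 (by simp)
    · obtain rfl : e = e' := congrArg (Prod.fst) (Sum.inr.inj h1)
      rcases hu' with rfl | rfl
      · exact Or.inl h2
      · exact Or.inr h2
  have heq := nbr_pair' hne (hC.2 _ h) hsub
  constructor
  · have : Sum.inl ((diamond n).src e) ∈ C.neighborSet (Sum.inr (e, b)) := by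
      rw [heq]; exact Set.mem_insert _ _
    exact this
  · have : Sum.inl ((diamond n).tgt e) ∈ C.neighborSet (Sum.inr (e, b)) := by
      rw [heq]; exact Set.mem_insert_of_mem _ rfl
    exact this

lemma inl_nbrs (hC : IsCycleSubgraph C)
    (hno : ¬ ∃ e, Sum.inr (e, false) ∈ C.verts ∧ Sum.inr (e, true) ∈ C.verts)
    {v : (diamond n).V} (h : Sum.inl v ∈ C.verts) :
    ∃ e₁ b₁ e₂ b₂, e₁ ≠ e₂ ∧
      C.neighborSet (Sum.inl v) = {Sum.inr (e₁, b₁), Sum.inr (e₂, b₂)} ∧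
      ((diamond n).src e₁ = v ∨ (diamond n).tgt e₁ = v) ∧
      ((diamond n).src e₂ = v ∨ (diamond n).tgt e₂ = v) := by
  obtain ⟨x, y, hxy, hset⟩ := Set.ncard_eq_two.mp (hC.2 _ h)
  have hmemx : x ∈ C.neighborSet (Sum.inl v) := by rw [hset]; exact Set.mem_insert _ _
  have hmemy : y ∈ C.neighborSet (Sum.inl v) := by rw [hset]; exact Set.mem_insert_of_mem _ rfl
  have hx' := adj_succ_cases (C.adj_sub hmemx)
  have hy' := adj_succ_cases (C.adj_sub hmemy)
  obtain ⟨e₁, b₁, u₁, hu₁, h₁⟩ := hx'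
  obtain ⟨e₂, b₂, u₂, hu₂, h₂⟩ := hy'
  rcases h₁ with ⟨h11, h12⟩ | ⟨h11, h12⟩
  swap
  · exact absurd h11 (by simp)
  rcases h₂ with ⟨h21, h22⟩ | ⟨h21, h22⟩
  swap
  · exact absurd h21 (by simp)
  obtain rfl : v = u₁ := Sum.inl.inj h11
  obtain rfl : v = u₂ := Sum.inl.inj h21
  subst h12; subst h22
  refine ⟨e₁, b₁, e₂, b₂, ?_, hset, hu₁, hu₂⟩
  rintro rfl
  have hb : b₁ ≠ b₂ := by
    intro hb; exact hxy (by rw [hb])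
  apply hno
  have m1 : Sum.inr (e₁, b₁) ∈ C.verts := C.neighborSet_subset_verts _ hmemx
  have m2 : Sum.inr (e₁, b₂) ∈ C.verts := C.neighborSet_subset_verts _ hmemy
  rcases b₁ with _ | _ <;> rcases b₂ with _ | _
  · exact absurd rfl hb
  · exact ⟨e₁, m1, m2⟩
  · exact ⟨e₁, m2, m1⟩
  · exact absurd rfl hb

end Succ

section Succ2

variable {n : ℕ} {C : (DiamondGraph (n+1)).Subgraph}

lemma quad_case (hC : IsCycleSubgraph C) {e : (diamond n).E}
    (hf : Sum.inr (e, false) ∈ C.verts) (ht : Sum.inr (e, true) ∈ C.verts) :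
    C.verts.ncard = 4 := by
  set s := (diamond n).src e with hs
  set t := (diamond n).tgt e with htg
  have hst : s ≠ t := diamond_src_ne_tgt n e
  set Q : Set (diamond (n+1)).V :=
    {Sum.inl s, Sum.inl t, Sum.inr (e, false), Sum.inr (e, true)} with hQ
  have haf := inr_adj hC hf
  have hat := inr_adj hC ht
  have hsV : Sum.inl s ∈ C.verts := haf.1.snd_mem
  have htV : Sum.inl t ∈ C.verts := haf.2.snd_mem
  -- neighbor sets
  have hrne : (Sum.inr (e, false) : (diamond (n+1)).V) ≠ Sum.inr (e, true) := fun h =>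
    Bool.noConfusion (congrArg Prod.snd (Sum.inr.inj h))
  have hlne : (Sum.inl s : (diamond (n+1)).V) ≠ Sum.inl t := fun h => hst (Sum.inl.inj h)
  have hnbrs : C.neighborSet (Sum.inl s) = {Sum.inr (e, false), Sum.inr (e, true)} :=
    nbr_pair hrne (hC.2 _ hsV) haf.1.symm hat.1.symm
  have hnbrt : C.neighborSet (Sum.inl t) = {Sum.inr (e, false), Sum.inr (e, true)} :=
    nbr_pair hrne (hC.2 _ htV) haf.2.symm hat.2.symm
  have hnbrb : ∀ b, Sum.inr (e, b) ∈ C.verts →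
      C.neighborSet (Sum.inr (e, b)) = {Sum.inl s, Sum.inl t} := by
    intro b hb
    have h' := inr_adj hC hb
    exact nbr_pair hlne (hC.2 _ hb) h'.1 h'.2
  -- closure
  have key : ∀ x ∈ Q, ∀ z, C.Adj x z → z ∈ Q := by
    intro x hx z hz
    rcases hx with rfl | rfl | rfl | rfl
    · have : z ∈ C.neighborSet (Sum.inl s) := hz
      rw [hnbrs] at this
      rcases this with rfl | rfl
      · exact Or.inr (Or.inr (Or.inl rfl))
      · exact Or.inr (Or.inr (Or.inr rfl))
    · have : z ∈ C.neighborSet (Sum.inl t) := hz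
      rw [hnbrt] at this
      rcases this with rfl | rfl
      · exact Or.inr (Or.inr (Or.inl rfl))
      · exact Or.inr (Or.inr (Or.inr rfl))
    · have : z ∈ C.neighborSet (Sum.inr (e, false)) := hz
      rw [hnbrb false hf] at this
      rcases this with rfl | rfl
      · exact Or.inl rfl
      · exact Or.inr (Or.inl rfl)
    · have : z ∈ C.neighborSet (Sum.inr (e, true)) := hz
      rw [hnbrb true ht] at this
      rcases this with rfl | rfl
      · exact Or.inl rfl
      · exact Or.inr (Or.inl rfl)
  have walkQ : ∀ (x y : C.verts) (_ : C.coe.Walk x y), (x : (diamond (n+1)).V) ∈ Q →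
      (y : (diamond (n+1)).V) ∈ Q := by
    intro x y w
    induction w with
    | nil => exact id
    | cons h p ih =>
      intro hx
      exact ih (key _ hx _ h)
  have hQsub : C.verts ⊆ Q := by
    intro v hv
    obtain ⟨w⟩ := hC.1.coe.preconnected ⟨Sum.inl s, hsV⟩ ⟨v, hv⟩
    exact walkQ _ _ w (Or.inl rfl)
  have hsubQ : Q ⊆ C.verts := by
    rintro x (rfl | rfl | rfl | rfl) <;> assumption
  have : C.verts = Q := le_antisymm hQsub hsubQ
  rw [this, hQ]
  erw [Set.ncard_insert_of_notMem
      (by rintro (h | h | h)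
          · exact hlne h
          · exact Sum.inl_ne_inr h
          · exact Sum.inl_ne_inr h) (Set.toFinite _),
    Set.ncard_insert_of_notMem
      (by rintro (h | h)
          · exact Sum.inl_ne_inr h
          · exact Sum.inl_ne_inr h) (Set.toFinite _),
    Set.ncard_pair hrne]

end Succ2

/-- Projection of a subgraph of `D_{n+1}` to `D_n`. -/
def projC {n : ℕ} (C : (DiamondGraph (n+1)).Subgraph) : (DiamondGraph n).Subgraph where
  verts := {v | Sum.inl v ∈ C.verts}
  Adj u v := ∃ e b, Sum.inr (e, b) ∈ C.verts ∧
    (((diamond n).src e = u ∧ (diamond n).tgt e = v) ∨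
     ((diamond n).src e = v ∧ (diamond n).tgt e = u)) ∧
    C.Adj (Sum.inr (e, b)) (Sum.inl u) ∧ C.Adj (Sum.inr (e, b)) (Sum.inl v)
  adj_sub := by
    rintro u v ⟨e, b, hm, h, h1, h2⟩
    refine ⟨?_, e, h⟩
    rcases h with ⟨rfl, rfl⟩ | ⟨rfl, rfl⟩
    · exact diamond_src_ne_tgt n e
    · exact (diamond_src_ne_tgt n e).symm
  edge_vert := by
    rintro u v ⟨e, b, hm, h, h1, h2⟩
    exact h1.snd_mem
  symm := by
    refine ⟨?_⟩
    rintro u v ⟨e, b, hm, h, h1, h2⟩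
    refine ⟨e, b, hm, ?_, h2, h1⟩
    rcases h with ⟨h1', h2'⟩ | ⟨h1', h2'⟩
    exacts [Or.inr ⟨h1', h2'⟩, Or.inl ⟨h1', h2'⟩]

section Proj

variable {n : ℕ} {C : (DiamondGraph (n+1)).Subgraph}

lemma projC_adj_of (hC : IsCycleSubgraph C) {e : (diamond n).E} {b : Bool}
    {v w : (diamond n).V} (hm : Sum.inr (e, b) ∈ C.verts)
    (hvw : ((diamond n).src e = v ∧ (diamond n).tgt e = w) ∨
           ((diamond n).src e = w ∧ (diamond n).tgt e = v)) :
    (projC C).Adj v w := by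
  refine ⟨e, b, hm, hvw, ?_, ?_⟩ <;>
    rcases hvw with ⟨h1, h2⟩ | ⟨h1, h2⟩ <;>
    first
    | exact h1 ▸ (inr_adj hC hm).1
    | exact h2 ▸ (inr_adj hC hm).2

lemma projC_nbr (hC : IsCycleSubgraph C)
    (hno : ¬ ∃ e, Sum.inr (e, false) ∈ C.verts ∧ Sum.inr (e, true) ∈ C.verts)
    {v : (diamond n).V} (h : Sum.inl v ∈ C.verts) :
    ((projC C).neighborSet v).ncard = 2 := by
  obtain ⟨e₁, b₁, e₂, b₂, hee, hset, hu₁, hu₂⟩ := inl_nbrs hC hno h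
  have m₁ : Sum.inr (e₁, b₁) ∈ C.verts := by
    refine C.neighborSet_subset_verts (Sum.inl v) ?_
    rw [hset]; exact Set.mem_insert _ _
  have m₂ : Sum.inr (e₂, b₂) ∈ C.verts := by
    refine C.neighborSet_subset_verts (Sum.inl v) ?_
    rw [hset]; exact Set.mem_insert_of_mem _ rfl
  have other : ∀ (e : (diamond n).E), ((diamond n).src e = v ∨ (diamond n).tgt e = v) →
      ∃ w, ((diamond n).src e = v ∧ (diamond n).tgt e = w) ∨
           ((diamond n).src e = w ∧ (diamond n).tgt e = v) := by
    rintro e (he | he)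
    · exact ⟨(diamond n).tgt e, Or.inl ⟨he, rfl⟩⟩
    · exact ⟨(diamond n).src e, Or.inr ⟨rfl, he⟩⟩
  obtain ⟨w₁, hw₁⟩ := other e₁ hu₁
  obtain ⟨w₂, hw₂⟩ := other e₂ hu₂
  have hww : w₁ ≠ w₂ := by
    rintro rfl
    apply hee
    apply diamond_edge_ext n
    rcases hw₁ with ⟨p1, p2⟩ | ⟨p1, p2⟩ <;> rcases hw₂ with ⟨q1, q2⟩ | ⟨q1, q2⟩
    · exact Or.inl ⟨p1.trans q1.symm, p2.trans q2.symm⟩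
    · exact Or.inr ⟨p1.trans q2.symm, p2.trans q1.symm⟩
    · exact Or.inr ⟨p1.trans q2.symm, p2.trans q1.symm⟩
    · exact Or.inl ⟨p1.trans q1.symm, p2.trans q2.symm⟩
  have hsub : (projC C).neighborSet v ⊆ {w₁, w₂} := by
    rintro u ⟨e, b, hm, hor, h1, h2⟩
    have : Sum.inr (e, b) ∈ C.neighborSet (Sum.inl v) := h1.symm
    rw [hset] at this
    have hcase : (e = e₁ ∧ b = b₁) ∨ (e = e₂ ∧ b = b₂) := by
      rcases this with h' | h'
      · have := Sum.inr.inj h'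
        exact Or.inl ⟨congrArg Prod.fst this, congrArg Prod.snd this⟩
      · have := Sum.inr.inj h'
        exact Or.inr ⟨congrArg Prod.fst this, congrArg Prod.snd this⟩
    rcases hcase with ⟨rfl, rfl⟩ | ⟨rfl, rfl⟩
    · rcases hw₁ with ⟨s1, s2⟩ | ⟨s1, s2⟩ <;> rcases hor with ⟨o1, o2⟩ | ⟨o1, o2⟩
      · exact Or.inl (o2.symm.trans s2)
      · exact absurd (s1.trans o2.symm) (diamond_src_ne_tgt n e)
      · exact absurd (o1.trans s2.symm) (diamond_src_ne_tgt n e)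
      · exact Or.inl (o1.symm.trans s1)
    · rcases hw₂ with ⟨s1, s2⟩ | ⟨s1, s2⟩ <;> rcases hor with ⟨o1, o2⟩ | ⟨o1, o2⟩
      · exact Or.inr (o2.symm.trans s2)
      · exact absurd (s1.trans o2.symm) (diamond_src_ne_tgt n e)
      · exact absurd (o1.trans s2.symm) (diamond_src_ne_tgt n e)
      · exact Or.inr (o1.symm.trans s1)
  have heq : (projC C).neighborSet v = {w₁, w₂} := by
    refine Set.Subset.antisymm hsub ?_
    rintro z (rfl | rfl)
    · exact projC_adj_of hC m₁ hw₁
    · exact projC_adj_of hC m₂ hw₂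
  rw [heq, Set.ncard_pair hww]

end Proj

section Proj2

variable {n : ℕ} {C : (DiamondGraph (n+1)).Subgraph}

lemma projC_reach (hC : IsCycleSubgraph C) (k : ℕ) :
    ∀ (u v : (diamond n).V) (hu : Sum.inl u ∈ C.verts) (hv : Sum.inl v ∈ C.verts)
      (w : C.coe.Walk ⟨Sum.inl u, hu⟩ ⟨Sum.inl v, hv⟩), w.length ≤ k →
      (projC C).coe.Reachable ⟨u, hu⟩ ⟨v, hv⟩ := by
  induction k with
  | zero =>
    intro u v hu hv w hw
    have h0 := SimpleGraph.Walk.eq_of_length_eq_zero (Nat.le_zero.mp hw)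
    obtain rfl : u = v := Sum.inl.inj (congrArg Subtype.val h0)
    exact SimpleGraph.Reachable.refl _
  | succ k ih =>
    intro u v hu hv w hw
    cases w with
    | nil => exact SimpleGraph.Reachable.refl _
    | @cons _ z _ h p =>
      obtain ⟨zv, hz⟩ := z
      have hadj : C.Adj (Sum.inl u) zv := h
      obtain ⟨e, b, u', hu', hcase⟩ := adj_succ_cases (C.adj_sub hadj)
      rcases hcase with ⟨h1, h2⟩ | ⟨h1, h2⟩
      swap
      · exact absurd h1 (by simp)
      obtain rfl : u = u' := Sum.inl.inj h1
      subst h2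
      cases p with
      | @cons _ z2 _ h' p' =>
        obtain ⟨z2v, hz2⟩ := z2
        have hadj2 : C.Adj (Sum.inr (e, b)) z2v := h'
        obtain ⟨e', b', u2, hu2, hcase2⟩ := adj_succ_cases (C.adj_sub hadj2)
        rcases hcase2 with ⟨h1', h2'⟩ | ⟨h1', h2'⟩
        · exact absurd h1' (by simp)
        obtain ⟨rfl, rfl⟩ : e = e' ∧ b = b' := by
          have := Sum.inr.inj h1'
          exact ⟨congrArg Prod.fst this, congrArg Prod.snd this⟩
        subst h2'
        have hlen : p'.length ≤ k := by
          simp only [SimpleGraph.Walk.length_cons] at hw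
          omega
        have hrest := ih u2 v hz2 hv p' hlen
        refine SimpleGraph.Reachable.trans ?_ hrest
        by_cases huu : u = u2
        · subst huu
          exact SimpleGraph.Reachable.refl _
        · refine SimpleGraph.Adj.reachable ?_
          show (projC C).Adj u u2
          refine projC_adj_of hC hz ?_
          rcases hu' with ha | ha <;> rcases hu2 with hb | hb
          · exact absurd (ha.symm.trans hb ▸ rfl : u = u2) huu
          · exact Or.inl ⟨ha, hb⟩
          · exact Or.inr ⟨hb, ha⟩
          · exact absurd (ha.symm.trans hb ▸ rfl : u = u2) huu

end Proj2

section Proj3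

variable {n : ℕ} {C : (DiamondGraph (n+1)).Subgraph}

lemma projC_cycle (hC : IsCycleSubgraph C)
    (hno : ¬ ∃ e, Sum.inr (e, false) ∈ C.verts ∧ Sum.inr (e, true) ∈ C.verts) :
    IsCycleSubgraph (projC C) := by
  constructor
  · rw [SimpleGraph.Subgraph.connected_iff]
    constructor
    · constructor
      rintro ⟨u, hu⟩ ⟨v, hv⟩
      obtain ⟨w⟩ := hC.1.coe.preconnected ⟨Sum.inl u, hu⟩ ⟨Sum.inl v, hv⟩
      exact projC_reach hC w.length u v hu hv w le_rfl
    · obtain ⟨x, hx⟩ := hC.1.nonempty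
      rcases x with v | ⟨e, b⟩
      · exact ⟨v, hx⟩
      · exact ⟨(diamond n).src e, ((inr_adj hC hx).1).snd_mem⟩
  · intro v hv
    exact projC_nbr hC hno hv

lemma projC_count (hC : IsCycleSubgraph C)
    (hno : ¬ ∃ e, Sum.inr (e, false) ∈ C.verts ∧ Sum.inr (e, true) ∈ C.verts) :
    C.verts.ncard = 2 * (projC C).verts.ncard := by
  classical
  set A : Set (diamond (n+1)).V := C.verts ∩ Set.range Sum.inl with hA
  set B : Set (diamond (n+1)).V := C.verts ∩ Set.range Sum.inr with hB
  have hunion : C.verts = A ∪ B := by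
    apply Set.Subset.antisymm
    · intro x hx
      rcases x with v | p
      · exact Or.inl ⟨hx, ⟨v, rfl⟩⟩
      · exact Or.inr ⟨hx, ⟨p, rfl⟩⟩
    · rintro x (⟨hx, -⟩ | ⟨hx, -⟩) <;> exact hx
  have hdisj : Disjoint A B := by
    rw [Set.disjoint_left]
    rintro x ⟨-, v, rfl⟩ ⟨-, p, hp⟩
    exact Sum.inr_ne_inl hp
  have himg : A = Sum.inl '' (projC C).verts := by
    apply Set.Subset.antisymm
    · rintro x ⟨hx, v, rfl⟩
      exact ⟨v, hx, rfl⟩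
    · rintro x ⟨v, hv, rfl⟩
      exact ⟨hv, v, rfl⟩
  have hcardA : A.ncard = (projC C).verts.ncard := by
    rw [himg]; exact Set.ncard_image_of_injective _ Sum.inl_injective
  -- double counting
  have hAB : A.ncard = B.ncard := by
    have hAf : A.Finite := Set.toFinite _
    have hBf : B.Finite := Set.toFinite _
    have key : ∑ x ∈ hAf.toFinset, (hBf.toFinset.filter (fun y => C.Adj x y)).card =
               ∑ y ∈ hBf.toFinset, (hAf.toFinset.filter (fun x => C.Adj x y)).card := by
      simp only [Finset.card_filter]
      rw [Finset.sum_comm]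
    have hfibA : ∀ x ∈ hAf.toFinset, (hBf.toFinset.filter (fun y => C.Adj x y)).card = 2 := by
      intro x hx
      rw [Set.Finite.mem_toFinset] at hx
      obtain ⟨hxC, v, rfl⟩ := hx
      have hNf : (C.neighborSet (Sum.inl v)).Finite := Set.toFinite _
      have : hBf.toFinset.filter (fun y => C.Adj (Sum.inl v) y) = hNf.toFinset := by
        ext y
        simp only [Finset.mem_filter, Set.Finite.mem_toFinset]
        constructor
        · rintro ⟨-, h⟩; exact h
        · intro h
          refine ⟨⟨h.snd_mem, ?_⟩, h⟩
          obtain ⟨e, b, u, hu, hcase⟩ := adj_succ_cases (C.adj_sub h)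
          rcases hcase with ⟨h1, h2⟩ | ⟨h1, h2⟩
          · exact h2 ▸ ⟨(e, b), rfl⟩
          · exact absurd h1 (by simp)
      rw [this, ← Set.ncard_eq_toFinset_card _ hNf]
      exact hC.2 _ hxC
    have hfibB : ∀ y ∈ hBf.toFinset, (hAf.toFinset.filter (fun x => C.Adj x y)).card = 2 := by
      intro y hy
      rw [Set.Finite.mem_toFinset] at hy
      obtain ⟨hyC, p, rfl⟩ := hy
      have hNf : (C.neighborSet (Sum.inr p)).Finite := Set.toFinite _
      have : hAf.toFinset.filter (fun x => C.Adj x (Sum.inr p)) = hNf.toFinset := by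
        ext x
        simp only [Finset.mem_filter, Set.Finite.mem_toFinset]
        constructor
        · rintro ⟨-, h⟩; exact h.symm
        · intro h
          refine ⟨⟨h.snd_mem, ?_⟩, h.symm⟩
          obtain ⟨e, b, u, hu, hcase⟩ := adj_succ_cases (C.adj_sub h)
          rcases hcase with ⟨h1, h2⟩ | ⟨h1, h2⟩
          · exact absurd h1 (by simp)
          · exact h2 ▸ ⟨u, rfl⟩
      rw [this, ← Set.ncard_eq_toFinset_card _ hNf]
      exact hC.2 _ hyC
    rw [Finset.sum_congr rfl hfibA, Finset.sum_congr rfl hfibB] at key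
    simp only [Finset.sum_const, smul_eq_mul] at key
    rw [Set.ncard_eq_toFinset_card _ hAf, Set.ncard_eq_toFinset_card _ hBf]
    omega
  rw [hunion, Set.ncard_union_eq hdisj (Set.toFinite _) (Set.toFinite _), hAB, ← hcardA]
  omega

end Proj3

/-- Every cycle in `D_n` has length `2^j` for some `2 ≤ j ≤ n + 1`;
in particular the length of every cycle in `D_n` is a power of `2`. -/
theorem cycle_lengths_in_diamonds (n : ℕ) (C : (DiamondGraph n).Subgraph)
    (hC : IsCycleSubgraph C) :
    ∃ j : ℕ, 2 ≤ j ∧ j ≤ n + 1 ∧ C.verts.ncard = 2 ^ j := by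
  induction n with
  | zero =>
    exfalso
    obtain ⟨v, hv⟩ := hC.1.nonempty
    have h2 := hC.2 v hv
    have key : ∀ x y : (diamond 0).V, x ≠ y → x = Bool.not y :=
      (by decide : ∀ x y : Bool, x ≠ y → x = !y)
    have hsub : C.neighborSet v ⊆ {Bool.not v} := by
      intro x hx
      exact key x v (C.adj_sub hx).ne'
    have := Set.ncard_le_ncard hsub (Set.toFinite _)
    erw [h2, Set.ncard_singleton] at this
    omega
  | succ n ih =>
    by_cases hq : ∃ e, Sum.inr (e, false) ∈ C.verts ∧ Sum.inr (e, true) ∈ C.verts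
    · obtain ⟨e, hf, ht⟩ := hq
      exact ⟨2, le_rfl, by omega, by rw [quad_case hC hf ht]; norm_num⟩
    · obtain ⟨j, hj2, hjn, hcard⟩ := ih (projC C) (projC_cycle hC hq)
      refine ⟨j + 1, by omega, by omega, ?_⟩
      rw [projC_count hC hq, hcard, pow_succ]
      ring
end

section
/- For every n ≥ 1 and every h ∈ {1, …, n}, the unweighted Laakso graph L_n contains an isometric cycle of length 4^h: there is a cycle subgraph C of L_n with 4^h vertices such that for all vertices u, v of C the shortest-path distance in L_n equals the shortest-path distance in the cycle C, i.e., d_{L_n}(u,v) = d_C(u,v). -/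
namespace LKaux
open SimpleGraph Function

/-! ### circle distance on `ZMod` -/

def cdist {N : ℕ} (i j : ZMod N) : ℕ := min ((j - i).val) ((i - j).val)

lemma cdist_comm {N : ℕ} (i j : ZMod N) : cdist i j = cdist j i := min_comm _ _

lemma cdist_self {N : ℕ} (i : ZMod N) : cdist i i = 0 := by simp [cdist]

lemma natCast_val_eq {N : ℕ} [NeZero N] (x : ZMod N) : ((x.val : ℕ) : ZMod N) = x :=
  ZMod.natCast_rightInverse x

lemma cdist_le_natAbs {N : ℕ} [NeZero N] (i j : ZMod N) (m : ℤ)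
    (hm : (m : ZMod N) = j - i) : cdist i j ≤ m.natAbs := by
  rcases le_or_gt 0 m with h | h
  · have h1 : ((m.natAbs : ℕ) : ZMod N) = j - i := by
      rw [← Int.cast_natCast (R := ZMod N), Int.natAbs_of_nonneg h]; exact hm
    calc cdist i j ≤ (j - i).val := min_le_left _ _
      _ = m.natAbs % N := by rw [← h1, ZMod.val_natCast]
      _ ≤ m.natAbs := Nat.mod_le _ _
  · have h1 : ((m.natAbs : ℕ) : ZMod N) = i - j := by
      have : ((-m : ℤ) : ZMod N) = i - j := by rw [Int.cast_neg, hm]; ring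
      rw [← this]
      have : ((m.natAbs : ℤ)) = -m := by omega
      rw [← this, Int.cast_natCast]
    calc cdist i j ≤ (i - j).val := min_le_right _ _
      _ = m.natAbs % N := by rw [← h1, ZMod.val_natCast]
      _ ≤ m.natAbs := Nat.mod_le _ _

/-- a signed lift realizing the circle distance -/
lemma exists_lift {N : ℕ} [NeZero N] (i j : ZMod N) :
    ∃ m : ℤ, (m : ZMod N) = j - i ∧ m.natAbs = cdist i j := by
  rcases le_total ((j - i).val) ((i - j).val) with h | h
  · refine ⟨((j - i).val : ℤ), ?_, ?_⟩
    · rw [Int.cast_natCast, natCast_val_eq]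
    · simp only [Int.natAbs_cast]; simp [cdist, Nat.min_eq_left h]
  · refine ⟨-(((i - j).val : ℤ)), ?_, ?_⟩
    · rw [Int.cast_neg, Int.cast_natCast, natCast_val_eq]; ring
    · simp only [Int.natAbs_neg, Int.natAbs_cast]; simp [cdist, Nat.min_eq_right h]

lemma cdist_triangle {N : ℕ} [NeZero N] (i j k : ZMod N) :
    cdist i k ≤ cdist i j + cdist j k := by
  obtain ⟨m1, hm1, habs1⟩ := exists_lift i j
  obtain ⟨m2, hm2, habs2⟩ := exists_lift j k
  have : ((m1 + m2 : ℤ) : ZMod N) = k - i := by push_cast [hm1, hm2]; ring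
  calc cdist i k ≤ (m1 + m2).natAbs := cdist_le_natAbs _ _ _ this
    _ ≤ m1.natAbs + m2.natAbs := Int.natAbs_add_le _ _
    _ = _ := by rw [habs1, habs2]

lemma cdist_tri4 {N : ℕ} [NeZero N] (a b c d : ZMod N) :
    cdist a d ≤ cdist a b + cdist b c + cdist c d :=
  le_trans (cdist_triangle a c d) (by
    have := cdist_triangle a b c; omega)

lemma cdist_add_add {N : ℕ} [NeZero N] (x : ZMod N) (r s : ℕ) :
    cdist (x + (r : ZMod N)) (x + (s : ZMod N)) ≤ Nat.dist r s := by
  have hm : (Int.cast ((s : ℤ) - (r : ℤ)) : ZMod N) = (x + (s : ZMod N)) - (x + (r : ZMod N)) := by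
    push_cast; ring
  have h1 := cdist_le_natAbs (x + (r : ZMod N)) (x + (s : ZMod N)) _ hm
  have h2 : ((s : ℤ) - (r : ℤ)).natAbs = Nat.dist r s := by
    simp [Nat.dist]; omega
  omega

lemma val_sub' {N : ℕ} [NeZero N] (q q' : ZMod N) :
    (q' - q).val = (q'.val + N - q.val) % N := by
  have h1 : q.val ≤ q'.val + N := le_trans (ZMod.val_lt q).le (by omega)
  have : ((q'.val + N - q.val : ℕ) : ZMod N) = q' - q := by
    rw [Nat.cast_sub h1]
    push_cast [natCast_val_eq]
    simp [ZMod.natCast_self]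
  rw [← this, ZMod.val_natCast]

/-! ### generic graph lemmas -/

lemma walk_lower {V : Type} {H : SimpleGraph V} (F : V → ℕ)
    (hF : ∀ x y, H.Adj x y → F x ≤ F y + 1) {x y : V} (W : H.Walk x y) :
    F x ≤ F y + W.length := by
  induction W with
  | nil => simp
  | cons h p ih => have := hF _ _ h; simp [SimpleGraph.Walk.length_cons]; omega

lemma dist_lower {V : Type} {H : SimpleGraph V} (F : V → ℕ)
    (hF : ∀ x y, H.Adj x y → F x ≤ F y + 1) {x y : V} (hr : H.Reachable x y)
    (hy : F y = 0) : F x ≤ H.dist x y := by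
  obtain ⟨W, hW⟩ := hr.exists_walk_length_eq_dist
  have := walk_lower F hF W
  omega

lemma chain_walk {V : Type} {H : SimpleGraph V} {K : ℕ} (g : ZMod K → V)
    (hadj : ∀ i, H.Adj (g i) (g (i + 1))) (i : ZMod K) (t : ℕ) :
    ∃ W : H.Walk (g i) (g (i + (t : ZMod K))), W.length = t := by
  induction t with
  | zero =>
    exact ⟨SimpleGraph.Walk.nil.copy rfl (by simp), by simp⟩
  | succ t ih =>
    obtain ⟨W, hW⟩ := ih
    have hcast : i + ((t : ZMod K)) + 1 = i + (((t + 1 : ℕ)) : ZMod K) := by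
      push_cast; ring
    refine ⟨(W.concat (hadj _)).copy rfl (congrArg g hcast), ?_⟩
    simp [SimpleGraph.Walk.length_copy, SimpleGraph.Walk.length_concat, hW]

lemma chain_reachable {V : Type} {H : SimpleGraph V} {K : ℕ} [NeZero K] (g : ZMod K → V)
    (hadj : ∀ i, H.Adj (g i) (g (i + 1))) (i j : ZMod K) : H.Reachable (g i) (g j) := by
  obtain ⟨W, _⟩ := chain_walk g hadj i (j - i).val
  exact ⟨W.copy rfl (congrArg g (by rw [natCast_val_eq, add_sub_cancel]))⟩

lemma chain_dist_le {V : Type} {H : SimpleGraph V} {K : ℕ} [NeZero K] (g : ZMod K → V)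
    (hadj : ∀ i, H.Adj (g i) (g (i + 1))) (i j : ZMod K) :
    H.dist (g i) (g j) ≤ cdist i j := by
  have h1 : H.dist (g i) (g j) ≤ (j - i).val := by
    obtain ⟨W, hW⟩ := chain_walk g hadj i (j - i).val
    have := SimpleGraph.dist_le (W.copy rfl (congrArg g (by rw [natCast_val_eq, add_sub_cancel])))
    rwa [SimpleGraph.Walk.length_copy, hW] at this
  have h2 : H.dist (g j) (g i) ≤ (i - j).val := by
    obtain ⟨W, hW⟩ := chain_walk g hadj j (i - j).val
    have := SimpleGraph.dist_le (W.copy rfl (congrArg g (by rw [natCast_val_eq, add_sub_cancel])))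
    rwa [SimpleGraph.Walk.length_copy, hW] at this
  rw [SimpleGraph.dist_comm] at h2
  simp only [cdist]; omega

lemma dist_lip {V : Type} {H : SimpleGraph V} (hc : H.Connected) {u w v : V}
    (h : H.Adj u w) : H.dist u v ≤ H.dist w v + 1 := by
  have h1 : H.dist u w ≤ 1 := by
    have := SimpleGraph.dist_le (SimpleGraph.Walk.cons h SimpleGraph.Walk.nil)
    simpa using this
  have := hc.dist_triangle (u := u) (v := w) (w := v)
  omega

end LKaux


namespace LK
open SimpleGraph Function LKaux

/-! ### basic facts about the Laakso graphs -/

instance E_nonempty : ∀ n, Nonempty (laakso n).E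
  | 0 => ⟨()⟩
  | n + 1 => ⟨(((E_nonempty n).some : (laakso n).E), (0 : Fin 6))⟩

lemma adj_src_tgt : ∀ (n : ℕ) (e : (laakso n).E),
    (LaaksoGraph n).Adj ((laakso n).src e) ((laakso n).tgt e)
  | 0, e => ⟨fun h => Bool.false_ne_true h, ⟨e, Or.inl ⟨rfl, rfl⟩⟩⟩
  | n + 1, e => by
    obtain ⟨e0, j⟩ := (e : (laakso n).E × Fin 6)
    refine ⟨?_, ⟨(e0, j), Or.inl ⟨rfl, rfl⟩⟩⟩
    fin_cases j
    · show ¬ Sum.inl _ = Sum.inr _ ; simp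
    · show ¬ Sum.inr (e0, (0:Fin 4)) = Sum.inr (e0, (1:Fin 4)); simp
    · show ¬ Sum.inr (e0, (0:Fin 4)) = Sum.inr (e0, (2:Fin 4)); simp
    · show ¬ Sum.inr (e0, (1:Fin 4)) = Sum.inr (e0, (3:Fin 4)); simp
    · show ¬ Sum.inr (e0, (2:Fin 4)) = Sum.inr (e0, (3:Fin 4)); simp
    · show ¬ Sum.inr (e0, (3:Fin 4)) = Sum.inl _; simp

/- concrete adjacencies in `laakso (n+1)`; we use the pattern
`u - a - b - d - v` and `a - c - d`. -/
section adjacencies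
variable {n : ℕ} (e : (laakso n).E)

lemma inl_ne_inr {n : ℕ} {u : (laakso n).V} {p : (laakso n).E × Fin 4} :
    (Sum.inl u : (laakso (n+1)).V) ≠ Sum.inr p :=
  fun h => Sum.inl_ne_inr h

lemma inr_ne {n : ℕ} {e e' : (laakso n).E} {i i' : Fin 4} (h : i ≠ i') :
    (Sum.inr (e, i) : (laakso (n+1)).V) ≠ Sum.inr (e', i') :=
  fun hh => h (congrArg Prod.snd (Sum.inr.inj hh))

lemma adj_ua : (LaaksoGraph (n+1)).Adj (Sum.inl ((laakso n).src e)) (Sum.inr (e, (0 : Fin 4))) :=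
  ⟨inl_ne_inr, ⟨(e, (0 : Fin 6)), Or.inl ⟨rfl, rfl⟩⟩⟩

lemma adj_ab : (LaaksoGraph (n+1)).Adj (Sum.inr (e, (0 : Fin 4))) (Sum.inr (e, (1 : Fin 4))) :=
  ⟨inr_ne (by decide), ⟨(e, (1 : Fin 6)), Or.inl ⟨rfl, rfl⟩⟩⟩

lemma adj_ac : (LaaksoGraph (n+1)).Adj (Sum.inr (e, (0 : Fin 4))) (Sum.inr (e, (2 : Fin 4))) :=
  ⟨inr_ne (by decide), ⟨(e, (2 : Fin 6)), Or.inl ⟨rfl, rfl⟩⟩⟩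

lemma adj_bd : (LaaksoGraph (n+1)).Adj (Sum.inr (e, (1 : Fin 4))) (Sum.inr (e, (3 : Fin 4))) :=
  ⟨inr_ne (by decide), ⟨(e, (3 : Fin 6)), Or.inl ⟨rfl, rfl⟩⟩⟩

lemma adj_cd : (LaaksoGraph (n+1)).Adj (Sum.inr (e, (2 : Fin 4))) (Sum.inr (e, (3 : Fin 4))) :=
  ⟨inr_ne (by decide), ⟨(e, (4 : Fin 6)), Or.inl ⟨rfl, rfl⟩⟩⟩

lemma adj_dv : (LaaksoGraph (n+1)).Adj (Sum.inr (e, (3 : Fin 4))) (Sum.inl ((laakso n).tgt e)) :=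
  ⟨(Ne.symm inl_ne_inr), ⟨(e, (5 : Fin 6)), Or.inl ⟨rfl, rfl⟩⟩⟩

end adjacencies

lemma reach_inl_of_adj {n : ℕ} {u v : (laakso n).V} (h : (LaaksoGraph n).Adj u v) :
    (LaaksoGraph (n+1)).Reachable (Sum.inl u) (Sum.inl v) := by
  obtain ⟨hne, e, (⟨h1, h2⟩ | ⟨h1, h2⟩)⟩ := h
  · subst h1; subst h2
    exact ((adj_ua e).reachable.trans (adj_ab e).reachable).trans
      ((adj_bd e).reachable.trans (adj_dv e).reachable)
  · subst h1; subst h2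
    exact (((adj_ua e).reachable.trans (adj_ab e).reachable).trans
      ((adj_bd e).reachable.trans (adj_dv e).reachable)).symm

lemma laakso_connected : ∀ n, (LaaksoGraph n).Connected := by
  intro n
  induction n with
  | zero =>
    rw [SimpleGraph.connected_iff]
    refine ⟨?_, ⟨false⟩⟩
    have hadj : (LaaksoGraph 0).Adj false true := ⟨fun h => Bool.false_ne_true h, ⟨(), Or.inl ⟨rfl, rfl⟩⟩⟩
    intro u v
    match u, v with
    | false, false => exact SimpleGraph.Reachable.refl _
    | true, true => exact SimpleGraph.Reachable.refl _
    | false, true => exact hadj.reachable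
    | true, false => exact hadj.reachable.symm
  | succ n ih =>
    rw [SimpleGraph.connected_iff]
    refine ⟨?_, ⟨Sum.inl (ih.nonempty.some)⟩⟩
    have lift_reach : ∀ u v : (laakso n).V,
        (LaaksoGraph (n+1)).Reachable (Sum.inl u) (Sum.inl v) := by
      intro u v
      obtain ⟨W⟩ := ih.preconnected u v
      induction W with
      | nil => exact SimpleGraph.Reachable.refl _
      | cons h p ih2 => exact (reach_inl_of_adj h).trans ih2
    have reach_inl : ∀ x : (laakso (n+1)).V, ∃ u, (LaaksoGraph (n+1)).Reachable x (Sum.inl u) := by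
      intro x
      match x with
      | Sum.inl u => exact ⟨u, SimpleGraph.Reachable.refl _⟩
      | Sum.inr (e, i) =>
        refine ⟨(laakso n).src e, ?_⟩
        fin_cases i
        · exact (adj_ua e).reachable.symm
        · exact (adj_ab e).reachable.symm.trans (adj_ua e).reachable.symm
        · exact (adj_ac e).reachable.symm.trans (adj_ua e).reachable.symm
        · exact ((adj_bd e).reachable.symm.trans (adj_ab e).reachable.symm).trans
            (adj_ua e).reachable.symm
    intro x y
    obtain ⟨u, hu⟩ := reach_inl x
    obtain ⟨v, hv⟩ := reach_inl y
    exact (hu.trans (lift_reach u v)).trans hv.symm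

end LK


namespace LK
open SimpleGraph Function LKaux

/-! ### the potential functions -/

open scoped Classical

def pos4 : Fin 4 → ℕ
  | 0 => 1
  | 1 => 2
  | 2 => 2
  | 3 => 3

@[simp] lemma pos4_0 : pos4 0 = 1 := rfl
@[simp] lemma pos4_1 : pos4 1 = 2 := rfl
@[simp] lemma pos4_2 : pos4 2 = 2 := rfl
@[simp] lemma pos4_3 : pos4 3 = 3 := rfl

lemma pos4_le (i : Fin 4) : 1 ≤ pos4 i ∧ pos4 i ≤ 3 := by fin_cases i <;> simp

/-- distance potential to a base vertex `v`, scaled by `4`. -/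
noncomputable def Fpot (n : ℕ) (v : (laakso n).V) (x : (laakso (n+1)).V) : ℕ :=
  match (x : (laakso n).V ⊕ ((laakso n).E × Fin 4)) with
  | Sum.inl w => 4 * (LaaksoGraph n).dist w v
  | Sum.inr (e, i) =>
      min (4 * (LaaksoGraph n).dist ((laakso n).src e) v + pos4 i)
          (4 * (LaaksoGraph n).dist ((laakso n).tgt e) v + (4 - pos4 i))

lemma Fpot_inl (n : ℕ) (v w : (laakso n).V) :
    Fpot n v (Sum.inl w) = 4 * (LaaksoGraph n).dist w v := rfl

lemma Fpot_inr (n : ℕ) (v : (laakso n).V) (e : (laakso n).E) (i : Fin 4) :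
    Fpot n v (Sum.inr (e, i)) =
      min (4 * (LaaksoGraph n).dist ((laakso n).src e) v + pos4 i)
          (4 * (LaaksoGraph n).dist ((laakso n).tgt e) v + (4 - pos4 i)) := rfl

/-- potential to an interior vertex of the gadget `e'`, at position `p'`. -/
noncomputable def Gpot (n : ℕ) (e' : (laakso n).E) (p' : ℕ) (x : (laakso (n+1)).V) : ℕ :=
  match (x : (laakso n).V ⊕ ((laakso n).E × Fin 4)) with
  | Sum.inl w =>
      min (Fpot n ((laakso n).src e') (Sum.inl w) + p')
          (Fpot n ((laakso n).tgt e') (Sum.inl w) + (4 - p'))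
  | Sum.inr (e, i) =>
      if e = e' then Nat.dist (pos4 i) p'
      else min (Fpot n ((laakso n).src e') (Sum.inr (e, i)) + p')
               (Fpot n ((laakso n).tgt e') (Sum.inr (e, i)) + (4 - p'))

lemma Gpot_inl (n : ℕ) (e' : (laakso n).E) (p' : ℕ) (w : (laakso n).V) :
    Gpot n e' p' (Sum.inl w) =
      min (Fpot n ((laakso n).src e') (Sum.inl w) + p')
          (Fpot n ((laakso n).tgt e') (Sum.inl w) + (4 - p')) := rfl

lemma Gpot_inr_eq (n : ℕ) (e' : (laakso n).E) (p' : ℕ) (i : Fin 4) :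
    Gpot n e' p' (Sum.inr (e', i)) = Nat.dist (pos4 i) p' := by
  show (if e' = e' then _ else _) = _
  rw [if_pos rfl]

lemma Gpot_inr_ne (n : ℕ) (e' : (laakso n).E) (p' : ℕ) {e : (laakso n).E} (he : e ≠ e')
    (i : Fin 4) :
    Gpot n e' p' (Sum.inr (e, i)) =
      min (Fpot n ((laakso n).src e') (Sum.inr (e, i)) + p')
          (Fpot n ((laakso n).tgt e') (Sum.inr (e, i)) + (4 - p')) := by
  show (if e = e' then _ else _) = _
  rw [if_neg he]

/-- all edges of `laakso (n+1)`, with their endpoints. -/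
lemma src_tgt_cases {n : ℕ} (e0 : (laakso n).E) (j : Fin 6) :
    ((laakso (n+1)).src ((e0, j) : (laakso n).E × Fin 6) =
        (Sum.inl ((laakso n).src e0) : (laakso (n+1)).V) ∧
      (laakso (n+1)).tgt ((e0, j) : (laakso n).E × Fin 6) = Sum.inr (e0, (0 : Fin 4))) ∨
    ((laakso (n+1)).src ((e0, j) : (laakso n).E × Fin 6) = Sum.inr (e0, (0 : Fin 4)) ∧
      (laakso (n+1)).tgt ((e0, j) : (laakso n).E × Fin 6) = Sum.inr (e0, (1 : Fin 4))) ∨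
    ((laakso (n+1)).src ((e0, j) : (laakso n).E × Fin 6) = Sum.inr (e0, (0 : Fin 4)) ∧
      (laakso (n+1)).tgt ((e0, j) : (laakso n).E × Fin 6) = Sum.inr (e0, (2 : Fin 4))) ∨
    ((laakso (n+1)).src ((e0, j) : (laakso n).E × Fin 6) = Sum.inr (e0, (1 : Fin 4)) ∧
      (laakso (n+1)).tgt ((e0, j) : (laakso n).E × Fin 6) = Sum.inr (e0, (3 : Fin 4))) ∨
    ((laakso (n+1)).src ((e0, j) : (laakso n).E × Fin 6) = Sum.inr (e0, (2 : Fin 4)) ∧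
      (laakso (n+1)).tgt ((e0, j) : (laakso n).E × Fin 6) = Sum.inr (e0, (3 : Fin 4))) ∨
    ((laakso (n+1)).src ((e0, j) : (laakso n).E × Fin 6) = Sum.inr (e0, (3 : Fin 4)) ∧
      (laakso (n+1)).tgt ((e0, j) : (laakso n).E × Fin 6) =
        (Sum.inl ((laakso n).tgt e0) : (laakso (n+1)).V)) := by
  fin_cases j
  · exact Or.inl ⟨rfl, rfl⟩
  · exact Or.inr (Or.inl ⟨rfl, rfl⟩)
  · exact Or.inr (Or.inr (Or.inl ⟨rfl, rfl⟩))
  · exact Or.inr (Or.inr (Or.inr (Or.inl ⟨rfl, rfl⟩)))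
  · exact Or.inr (Or.inr (Or.inr (Or.inr (Or.inl ⟨rfl, rfl⟩))))
  · exact Or.inr (Or.inr (Or.inr (Or.inr (Or.inr ⟨rfl, rfl⟩))))

lemma Fpot_lip (n : ℕ) (v : (laakso n).V) {x y : (laakso (n+1)).V}
    (hxy : (LaaksoGraph (n+1)).Adj x y) : Fpot n v x ≤ Fpot n v y + 1 := by
  have hc := laakso_connected n
  obtain ⟨hne, e, hor⟩ := hxy
  obtain ⟨e0, j⟩ := e
  have hlip1 : (LaaksoGraph n).dist ((laakso n).src e0) v ≤
      (LaaksoGraph n).dist ((laakso n).tgt e0) v + 1 := dist_lip hc (adj_src_tgt n e0)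
  have hlip2 : (LaaksoGraph n).dist ((laakso n).tgt e0) v ≤
      (LaaksoGraph n).dist ((laakso n).src e0) v + 1 := dist_lip hc (adj_src_tgt n e0).symm
  rcases src_tgt_cases e0 j with ⟨hS, hT⟩ | ⟨hS, hT⟩ | ⟨hS, hT⟩ | ⟨hS, hT⟩ | ⟨hS, hT⟩ | ⟨hS, hT⟩ <;>
    rcases hor with ⟨h1, h2⟩ | ⟨h1, h2⟩ <;> rw [← h1, ← h2, hS, hT] <;>
    simp only [Fpot_inl, Fpot_inr, pos4_0, pos4_1, pos4_2, pos4_3] <;> omega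

lemma Gpot_lip (n : ℕ) (e' : (laakso n).E) (p' : ℕ) (h1p : 1 ≤ p') (h3p : p' ≤ 3)
    {x y : (laakso (n+1)).V} (hxy : (LaaksoGraph (n+1)).Adj x y) :
    Gpot n e' p' x ≤ Gpot n e' p' y + 1 := by
  have hd1 : (LaaksoGraph n).dist ((laakso n).src e') ((laakso n).tgt e') = 1 :=
    SimpleGraph.dist_eq_one_iff_adj.mpr (adj_src_tgt n e')
  have hd2 : (LaaksoGraph n).dist ((laakso n).tgt e') ((laakso n).src e') = 1 := by
    rw [SimpleGraph.dist_comm]; exact hd1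
  have l1 : Fpot n ((laakso n).src e') x ≤ Fpot n ((laakso n).src e') y + 1 :=
    Fpot_lip n _ hxy
  have l2 : Fpot n ((laakso n).src e') y ≤ Fpot n ((laakso n).src e') x + 1 :=
    Fpot_lip n _ hxy.symm
  have l3 : Fpot n ((laakso n).tgt e') x ≤ Fpot n ((laakso n).tgt e') y + 1 :=
    Fpot_lip n _ hxy
  have l4 : Fpot n ((laakso n).tgt e') y ≤ Fpot n ((laakso n).tgt e') x + 1 :=
    Fpot_lip n _ hxy.symm
  obtain ⟨hne, e, hor⟩ := id hxy
  obtain ⟨e0, j⟩ := e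
  by_cases he : e0 = e'
  · subst he
    rcases src_tgt_cases e0 j with ⟨hS, hT⟩ | ⟨hS, hT⟩ | ⟨hS, hT⟩ | ⟨hS, hT⟩ | ⟨hS, hT⟩ | ⟨hS, hT⟩ <;>
      rcases hor with ⟨h1, h2⟩ | ⟨h1, h2⟩ <;> subst h1 <;> subst h2 <;> rw [hS, hT] <;>
      simp only [Gpot_inl, Gpot_inr_eq, Fpot_inl, SimpleGraph.dist_self, hd1, hd2,
        pos4_0, pos4_1, pos4_2, pos4_3, Nat.dist] <;> omega
  · rcases src_tgt_cases e0 j with ⟨hS, hT⟩ | ⟨hS, hT⟩ | ⟨hS, hT⟩ | ⟨hS, hT⟩ | ⟨hS, hT⟩ | ⟨hS, hT⟩ <;>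
      rcases hor with ⟨h1, h2⟩ | ⟨h1, h2⟩ <;> subst h1 <;> subst h2 <;>
      rw [hS, hT] at l1 l2 l3 l4 ⊢ <;>
      simp only [Gpot_inl, Gpot_inr_ne n e' p' he] <;> omega

/-! ### arithmetic for the lifted cycle -/

def Iota {M : ℕ} (q : ZMod M) : ZMod (4 * M) := ((4 * q.val : ℕ) : ZMod (4 * M))

def Qm {M : ℕ} (k : ZMod (4 * M)) : ZMod M := ((k.val / 4 : ℕ) : ZMod M)

def Rm {M : ℕ} (k : ZMod (4 * M)) : ℕ := k.val % 4

section arith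
variable {M : ℕ} [NeZero M]

instance : NeZero (4 * M) := ⟨by have := NeZero.ne M; omega⟩

lemma val_Iota (q : ZMod M) : (Iota q).val = 4 * q.val := by
  rw [Iota, ZMod.val_natCast, Nat.mod_eq_of_lt]
  have := ZMod.val_lt q; omega

lemma Iota_sub_val (q q' : ZMod M) : (Iota q' - Iota q).val = 4 * (q' - q).val := by
  rw [val_sub', val_sub', val_Iota, val_Iota]
  have h1 := ZMod.val_lt q
  rw [show 4 * q'.val + 4 * M - 4 * q.val = 4 * (q'.val + M - q.val) by omega,
    Nat.mul_mod_mul_left]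

lemma cdist_Iota (q q' : ZMod M) : cdist (Iota q) (Iota q') = 4 * cdist q q' := by
  rw [cdist, cdist, Iota_sub_val, Iota_sub_val]; omega

lemma Iota_succ (hM1 : 1 < M) (q : ZMod M) :
    Iota (q + 1) = Iota q + ((4 : ℕ) : ZMod (4 * M)) := by
  haveI : Fact (1 < M) := ⟨hM1⟩
  have h : (Iota (q + 1) - Iota q).val = 4 := by
    rw [Iota_sub_val, add_sub_cancel_left, ZMod.val_one]
  have h2 : Iota (q + 1) - Iota q = ((4 : ℕ) : ZMod (4 * M)) := by
    conv_lhs => rw [← natCast_val_eq (Iota (q + 1) - Iota q)]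
    rw [h]
  exact sub_eq_iff_eq_add'.mp h2

lemma Rm_lt (k : ZMod (4 * M)) : Rm k < 4 := Nat.mod_lt _ (by omega)

lemma k_decomp (k : ZMod (4 * M)) : k = Iota (Qm k) + ((Rm k : ℕ) : ZMod (4 * M)) := by
  have hlt := ZMod.val_lt k
  have hq : (Qm k).val = k.val / 4 := by
    rw [Qm, ZMod.val_natCast, Nat.mod_eq_of_lt (by omega)]
  rw [Iota, hq, ← Nat.cast_add, Rm, show 4 * (k.val / 4) + k.val % 4 = k.val by omega,
    natCast_val_eq]

lemma Qm_succ_lt {k : ZMod (4 * M)} (h : Rm k < 3) :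
    Qm (k + 1) = Qm k ∧ Rm (k + 1) = Rm k + 1 := by
  haveI : Fact (1 < 4 * M) := ⟨by have := NeZero.ne M; omega⟩
  have hlt := ZMod.val_lt k
  have hv : (k + 1).val = (k.val + 1) % (4 * M) := by
    rw [ZMod.val_add, ZMod.val_one]
  have hR := Rm_lt k
  have hne : k.val + 1 < 4 * M := by
    rcases Nat.lt_or_ge (k.val + 1) (4 * M) with h' | h'
    · exact h'
    · exfalso; have : k.val = 4 * M - 1 := by omega
      rw [Rm, this] at h; omega
  constructor
  · rw [Qm, Qm, hv, Nat.mod_eq_of_lt hne]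
    congr 1
    rw [Rm] at h; omega
  · rw [Rm, Rm, hv, Nat.mod_eq_of_lt hne]
    rw [Rm] at h; omega

lemma Qm_succ_eq {k : ZMod (4 * M)} (h : Rm k = 3) :
    Qm (k + 1) = Qm k + 1 ∧ Rm (k + 1) = 0 := by
  haveI : Fact (1 < 4 * M) := ⟨by have := NeZero.ne M; omega⟩
  have hlt := ZMod.val_lt k
  have hv : (k + 1).val = (k.val + 1) % (4 * M) := by
    rw [ZMod.val_add, ZMod.val_one]
  rw [Rm] at h
  rcases Nat.lt_or_ge (k.val + 1) (4 * M) with h' | h'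
  · constructor
    · rw [Qm, Qm, hv, Nat.mod_eq_of_lt h', show (k.val + 1) / 4 = k.val / 4 + 1 by omega,
        Nat.cast_add, Nat.cast_one]
    · rw [Rm, hv, Nat.mod_eq_of_lt h']; omega
  · have hk : k.val + 1 = 4 * M := by omega
    have hv0 : (k + 1).val = 0 := by rw [hv, hk]; simp
    constructor
    · rw [Qm, Qm, hv0, show k.val / 4 = M - 1 by omega]
      have hM := NeZero.ne M
      rw [show ((M - 1 : ℕ) : ZMod M) + 1 = (((M - 1) + 1 : ℕ) : ZMod M) by push_cast; ring,
        show (M - 1) + 1 = M by omega, ZMod.natCast_self]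
      simp
    · rw [Rm, hv0]

lemma cdist_piece_zero (q : ZMod M) (r : ℕ) :
    cdist (Iota q + ((r : ℕ) : ZMod (4 * M))) (Iota q) ≤ r := by
  have h := cdist_add_add (Iota q) r 0
  simpa [Nat.dist] using h

lemma cdist_piece_one (hM1 : 1 < M) (q : ZMod M) {r : ℕ} (hr : r ≤ 3) :
    cdist (Iota q + ((r : ℕ) : ZMod (4 * M))) (Iota (q + 1)) ≤ 4 - r := by
  rw [Iota_succ hM1]
  have h := cdist_add_add (Iota q) r 4
  have : Nat.dist r 4 = 4 - r := by simp [Nat.dist]; omega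
  omega

lemma circle_bound (hM1 : 1 < M) (q q' : ZMod M) {r r' : ℕ} (hr : r ≤ 3) (hr' : r' ≤ 3) :
    (cdist (Iota q + ((r : ℕ) : ZMod (4 * M))) (Iota q' + ((r' : ℕ) : ZMod (4 * M)))
        ≤ 4 * cdist q q' + (r + r')) ∧
    (cdist (Iota q + ((r : ℕ) : ZMod (4 * M))) (Iota q' + ((r' : ℕ) : ZMod (4 * M)))
        ≤ 4 * cdist (q + 1) q' + ((4 - r) + r')) ∧
    (cdist (Iota q + ((r : ℕ) : ZMod (4 * M))) (Iota q' + ((r' : ℕ) : ZMod (4 * M)))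
        ≤ 4 * cdist q (q' + 1) + (r + (4 - r'))) ∧
    (cdist (Iota q + ((r : ℕ) : ZMod (4 * M))) (Iota q' + ((r' : ℕ) : ZMod (4 * M)))
        ≤ 4 * cdist (q + 1) (q' + 1) + ((4 - r) + (4 - r'))) := by
  have t1 := cdist_tri4 (Iota q + ((r : ℕ) : ZMod (4 * M))) (Iota q) (Iota q')
    (Iota q' + ((r' : ℕ) : ZMod (4 * M)))
  have t2 := cdist_tri4 (Iota q + ((r : ℕ) : ZMod (4 * M))) (Iota (q + 1)) (Iota q')
    (Iota q' + ((r' : ℕ) : ZMod (4 * M)))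
  have t3 := cdist_tri4 (Iota q + ((r : ℕ) : ZMod (4 * M))) (Iota q) (Iota (q' + 1))
    (Iota q' + ((r' : ℕ) : ZMod (4 * M)))
  have t4 := cdist_tri4 (Iota q + ((r : ℕ) : ZMod (4 * M))) (Iota (q + 1)) (Iota (q' + 1))
    (Iota q' + ((r' : ℕ) : ZMod (4 * M)))
  have p0 := cdist_piece_zero q r
  have p1 := cdist_piece_one hM1 q hr
  have p0' := cdist_piece_zero q' r'
  have p1' := cdist_piece_one hM1 q' hr'
  have c1 := cdist_Iota q q'
  have c2 := cdist_Iota (q + 1) q'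
  have c3 := cdist_Iota q (q' + 1)
  have c4 := cdist_Iota (q + 1) (q' + 1)
  have s1 := cdist_comm (Iota q + ((r : ℕ) : ZMod (4 * M))) (Iota q)
  have s2 := cdist_comm (Iota q + ((r : ℕ) : ZMod (4 * M))) (Iota (q + 1))
  have s3 := cdist_comm (Iota q' + ((r' : ℕ) : ZMod (4 * M))) (Iota q')
  have s4 := cdist_comm (Iota q' + ((r' : ℕ) : ZMod (4 * M))) (Iota (q' + 1))
  omega

end arith

/-! ### lifting a cycle from `laakso n` to `laakso (n+1)` -/

def idxF : ℕ → Fin 4 := fun r => if r = 1 then 0 else if r = 2 then 1 else 3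
def idxB : ℕ → Fin 4 := fun r => if r = 1 then 3 else if r = 2 then 1 else 0

lemma pos4_idxF {r : ℕ} (h1 : 1 ≤ r) (h3 : r ≤ 3) : pos4 (idxF r) = r := by
  interval_cases r <;> rfl

lemma pos4_idxB {r : ℕ} (h1 : 1 ≤ r) (h3 : r ≤ 3) : pos4 (idxB r) = 4 - r := by
  interval_cases r <;> rfl

def liftFun (n M : ℕ) (f : ZMod M → (laakso n).V) (ed : ZMod M → (laakso n).E)
    (ob : ZMod M → Bool) (k : ZMod (4 * M)) : (laakso (n + 1)).V :=
  if Rm k = 0 then Sum.inl (f (Qm k))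
  else Sum.inr (ed (Qm k), cond (ob (Qm k)) (idxF (Rm k)) (idxB (Rm k)))

lemma lift (n M : ℕ) (hM : 3 ≤ M) (f : ZMod M → (laakso n).V)
    (hinj : Function.Injective f)
    (hadj : ∀ i, (LaaksoGraph n).Adj (f i) (f (i + 1)))
    (hdist : ∀ i j, (LaaksoGraph n).dist (f i) (f j) = cdist i j) :
    ∃ f' : ZMod (4 * M) → (laakso (n + 1)).V,
      Function.Injective f' ∧ (∀ k, (LaaksoGraph (n + 1)).Adj (f' k) (f' (k + 1))) ∧
      (∀ k k', (LaaksoGraph (n + 1)).dist (f' k) (f' k') = cdist k k') := by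
  haveI : NeZero M := ⟨by omega⟩
  have hM1 : 1 < M := by omega
  have hc := laakso_connected n
  have h2ne : (2 : ZMod M) ≠ 0 := by
    intro h
    rw [show (2 : ZMod M) = ((2 : ℕ) : ZMod M) by push_cast; ring,
      ZMod.natCast_eq_zero_iff] at h
    have := Nat.le_of_dvd (by norm_num) h
    omega
  -- select the edges realizing consecutive adjacencies, together with orientations
  have hsel : ∀ q : ZMod M, ∃ p : (laakso n).E × Bool,
      (p.2 = true → ((laakso n).src p.1 = f q ∧ (laakso n).tgt p.1 = f (q + 1))) ∧
      (p.2 = false → ((laakso n).src p.1 = f (q + 1) ∧ (laakso n).tgt p.1 = f q)) := by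
    intro q
    obtain ⟨hne, e, h | h⟩ := hadj q
    · exact ⟨(e, true), ⟨fun _ => h, fun hc => absurd hc (by simp)⟩⟩
    · exact ⟨(e, false), ⟨fun hc => absurd hc (by simp), fun _ => h⟩⟩
  choose sel hsel1 hsel2 using hsel
  set ed : ZMod M → (laakso n).E := fun q => (sel q).1 with hed_def
  set ob : ZMod M → Bool := fun q => (sel q).2 with hob_def
  have hsrc : ∀ q, (ob q = true → ((laakso n).src (ed q) = f q ∧
        (laakso n).tgt (ed q) = f (q + 1))) ∧
      (ob q = false → ((laakso n).src (ed q) = f (q + 1) ∧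
        (laakso n).tgt (ed q) = f q)) :=
    fun q => ⟨hsel1 q, hsel2 q⟩
  -- injectivity of the selected edges
  have hqsucc : ∀ q : ZMod M, q + 1 ≠ q := by
    intro q h
    have : (1 : ZMod M) = 0 := by
      have := add_left_cancel (a := q) (b := (1 : ZMod M)) (c := 0) (by rw [add_zero]; exact h)
      exact this
    have h2 : (2 : ZMod M) = 0 := by rw [show (2 : ZMod M) = 1 + 1 by ring, this]; ring
    exact h2ne h2
  have edinj : ∀ q q', ed q = ed q' → q = q' := by
    intro q q' he
    rcases Bool.eq_false_or_eq_true (ob q) with hq | hq <;>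
      rcases Bool.eq_false_or_eq_true (ob q') with hq' | hq'
    · obtain ⟨a1, a2⟩ := (hsrc q).1 hq
      obtain ⟨b1, b2⟩ := (hsrc q').1 hq'
      rw [he] at a1; rw [b1] at a1; exact (hinj a1).symm
    · obtain ⟨a1, a2⟩ := (hsrc q).1 hq
      obtain ⟨b1, b2⟩ := (hsrc q').2 hq'
      rw [he] at a1 a2; rw [b1] at a1; rw [b2] at a2
      have e1 : q = q' + 1 := (hinj a1).symm
      have e2 : q + 1 = q' := (hinj a2).symm
      exact absurd (by linear_combination e2 - e1 : (2 : ZMod M) = 0) h2ne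
    · obtain ⟨a1, a2⟩ := (hsrc q).2 hq
      obtain ⟨b1, b2⟩ := (hsrc q').1 hq'
      rw [he] at a1 a2; rw [b1] at a1; rw [b2] at a2
      have e1 : q + 1 = q' := (hinj a1).symm
      have e2 : q = q' + 1 := (hinj a2).symm
      exact absurd (by linear_combination e1 - e2 : (2 : ZMod M) = 0) h2ne
    · obtain ⟨a1, a2⟩ := (hsrc q).2 hq
      obtain ⟨b1, b2⟩ := (hsrc q').2 hq'
      rw [he] at a1; rw [b1] at a1
      have h1 : q + 1 = q' + 1 := (hinj a1).symm
      have : q = q' := by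
        have := add_right_cancel h1; exact this
      exact this
  -- evaluation of the lifted map
  have heval0 : ∀ k : ZMod (4 * M), Rm k = 0 → liftFun n M f ed ob k = Sum.inl (f (Qm k)) := by
    intro k h; exact if_pos h
  have heval1 : ∀ k : ZMod (4 * M), Rm k ≠ 0 → liftFun n M f ed ob k =
      Sum.inr (ed (Qm k), cond (ob (Qm k)) (idxF (Rm k)) (idxB (Rm k))) := by
    intro k h; exact if_neg h
  -- adjacency of consecutive vertices
  have hadj' : ∀ k, (LaaksoGraph (n + 1)).Adj (liftFun n M f ed ob k)
      (liftFun n M f ed ob (k + 1)) := by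
    intro k
    have hR := Rm_lt (M := M) k
    rcases Nat.lt_or_ge (Rm k) 3 with h3 | h3
    · obtain ⟨hQ, hRs⟩ := Qm_succ_lt h3
      have hr012 : Rm k = 0 ∨ Rm k = 1 ∨ Rm k = 2 := by omega
      rcases hr012 with h | h | h
      · rw [heval0 k h, heval1 (k + 1) (by omega), hQ, hRs, h]
        cases hB : ob (Qm k)
        · obtain ⟨s1, s2⟩ := (hsrc (Qm k)).2 hB
          conv_lhs => rw [← s2]
          exact (adj_dv (ed (Qm k))).symm
        · obtain ⟨s1, s2⟩ := (hsrc (Qm k)).1 hB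
          conv_lhs => rw [← s1]
          exact adj_ua (ed (Qm k))
      · rw [heval1 k (by omega), heval1 (k + 1) (by omega), hQ, hRs, h]
        cases hB : ob (Qm k)
        · exact (adj_bd (ed (Qm k))).symm
        · exact adj_ab (ed (Qm k))
      · rw [heval1 k (by omega), heval1 (k + 1) (by omega), hQ, hRs, h]
        cases hB : ob (Qm k)
        · exact (adj_ab (ed (Qm k))).symm
        · exact adj_bd (ed (Qm k))
    · have h3' : Rm k = 3 := by omega
      obtain ⟨hQ, hRs⟩ := Qm_succ_eq h3'
      rw [heval1 k (by omega), heval0 (k + 1) hRs, hQ, h3']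
      cases hB : ob (Qm k)
      · obtain ⟨s1, s2⟩ := (hsrc (Qm k)).2 hB
        conv_rhs => rw [← s1]
        exact (adj_ua (ed (Qm k))).symm
      · obtain ⟨s1, s2⟩ := (hsrc (Qm k)).1 hB
        conv_rhs => rw [← s2]
        exact adj_dv (ed (Qm k))
  -- injectivity
  have hinj' : Function.Injective (liftFun n M f ed ob) := by
    intro k k' hkk
    have hR := Rm_lt (M := M) k
    have hR' := Rm_lt (M := M) k'
    by_cases h0 : Rm k = 0 <;> by_cases h0' : Rm k' = 0
    · rw [heval0 k h0, heval0 k' h0'] at hkk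
      have hq : Qm k = Qm k' := hinj (Sum.inl.inj hkk)
      calc k = Iota (Qm k) + ((Rm k : ℕ) : ZMod (4 * M)) := k_decomp k
        _ = Iota (Qm k') + ((Rm k' : ℕ) : ZMod (4 * M)) := by rw [hq, h0, h0']
        _ = k' := (k_decomp k').symm
    · rw [heval0 k h0, heval1 k' h0'] at hkk; exact absurd hkk inl_ne_inr
    · rw [heval1 k h0, heval0 k' h0'] at hkk; exact absurd hkk (Ne.symm inl_ne_inr)
    · rw [heval1 k h0, heval1 k' h0'] at hkk
      have hp := Sum.inr.inj hkk
      have he : ed (Qm k) = ed (Qm k') := congrArg (Prod.fst : (laakso n).E × Fin 4 → (laakso n).E) hp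
      have hq : Qm k = Qm k' := edinj _ _ he
      have hi := congrArg (Prod.snd : (laakso n).E × Fin 4 → Fin 4) hp
      simp only at hi
      rw [hq] at hi
      have hr : Rm k = Rm k' := by
        cases hB : ob (Qm k') <;> rw [hB] at hi <;> simp only [Bool.cond_true, Bool.cond_false] at hi
        · have := congrArg pos4 hi
          rw [pos4_idxB (by omega) (by omega), pos4_idxB (by omega) (by omega)] at this
          omega
        · have := congrArg pos4 hi
          rw [pos4_idxF (by omega) (by omega), pos4_idxF (by omega) (by omega)] at this
          omega
      calc k = Iota (Qm k) + ((Rm k : ℕ) : ZMod (4 * M)) := k_decomp k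
        _ = Iota (Qm k') + ((Rm k' : ℕ) : ZMod (4 * M)) := by rw [hq, hr]
        _ = k' := (k_decomp k').symm
  refine ⟨liftFun n M f ed ob, hinj', hadj', ?_⟩
  intro k k'
  refine le_antisymm (chain_dist_le _ hadj' k k') ?_
  have hreach := chain_reachable (liftFun n M f ed ob) hadj'
  have hR := Rm_lt (M := M) k
  have hR' := Rm_lt (M := M) k'
  have Feval : ∀ (v : (laakso n).V) (m : ZMod (4 * M)),
      Fpot n v (liftFun n M f ed ob m) =
        min (4 * (LaaksoGraph n).dist (f (Qm m)) v + Rm m)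
            (4 * (LaaksoGraph n).dist (f (Qm m + 1)) v + (4 - Rm m)) := by
    intro v m
    have hRm := Rm_lt (M := M) m
    by_cases h0 : Rm m = 0
    · rw [heval0 m h0, Fpot_inl, h0]
      have hlip : (LaaksoGraph n).dist (f (Qm m)) v ≤
          (LaaksoGraph n).dist (f (Qm m + 1)) v + 1 := dist_lip hc (hadj (Qm m))
      omega
    · rw [heval1 m h0]
      cases hB : ob (Qm m)
      · obtain ⟨s1, s2⟩ := (hsrc (Qm m)).2 hB
        rw [Bool.cond_false, Fpot_inr, s1, s2, pos4_idxB (by omega) (by omega)]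
        omega
      · obtain ⟨s1, s2⟩ := (hsrc (Qm m)).1 hB
        rw [Bool.cond_true, Fpot_inr, s1, s2, pos4_idxF (by omega) (by omega)]
  by_cases h0' : Rm k' = 0
  · have hzero : Fpot n (f (Qm k')) (liftFun n M f ed ob k') = 0 := by
      rw [heval0 k' h0', Fpot_inl, SimpleGraph.dist_self]
    have hlow := dist_lower (Fpot n (f (Qm k')))
      (fun x y h => Fpot_lip n _ h) (hreach k k') hzero
    rw [Feval (f (Qm k')) k, hdist, hdist] at hlow
    have hcb := circle_bound (M := M) hM1 (Qm k) (Qm k') (r := Rm k) (r' := Rm k')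
      (by omega) (by omega)
    have geq : cdist k k' = cdist (Iota (Qm k) + ((Rm k : ℕ) : ZMod (4 * M)))
        (Iota (Qm k') + ((Rm k' : ℕ) : ZMod (4 * M))) := by
      rw [← k_decomp k, ← k_decomp k']
    rw [geq]
    omega
  · have hfk' := heval1 k' h0'
    have hzero : Gpot n (ed (Qm k')) (pos4 (cond (ob (Qm k')) (idxF (Rm k')) (idxB (Rm k'))))
        (liftFun n M f ed ob k') = 0 := by
      rw [hfk', Gpot_inr_eq]
      simp [Nat.dist]
    set p' := pos4 (cond (ob (Qm k')) (idxF (Rm k')) (idxB (Rm k'))) with hp'def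
    have hp1 : 1 ≤ p' ∧ p' ≤ 3 := pos4_le _
    have hlow := dist_lower (Gpot n (ed (Qm k')) p')
      (fun x y h => Gpot_lip n _ _ hp1.1 hp1.2 h) (hreach k k') hzero
    have hp'val : (ob (Qm k') = true → p' = Rm k') ∧ (ob (Qm k') = false → p' = 4 - Rm k') := by
      constructor <;> intro hB <;> rw [hp'def, hB]
      · rw [Bool.cond_true, pos4_idxF (by omega) (by omega)]
      · rw [Bool.cond_false, pos4_idxB (by omega) (by omega)]
    by_cases hsame : Qm k = Qm k' ∧ Rm k ≠ 0
    · obtain ⟨hqq, h0⟩ := hsame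
      have hval : Gpot n (ed (Qm k')) p' (liftFun n M f ed ob k) =
          Nat.dist (pos4 (cond (ob (Qm k')) (idxF (Rm k)) (idxB (Rm k)))) p' := by
        rw [heval1 k h0, hqq, Gpot_inr_eq]
      rw [hval] at hlow
      have hclow : cdist k k' ≤ Nat.dist (Rm k) (Rm k') := by
        have hkd2 : k' = Iota (Qm k) + ((Rm k' : ℕ) : ZMod (4 * M)) := by
          rw [hqq]; exact k_decomp k'
        have geq : cdist k k' = cdist (Iota (Qm k) + ((Rm k : ℕ) : ZMod (4 * M)))
            (Iota (Qm k) + ((Rm k' : ℕ) : ZMod (4 * M))) := by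
          rw [← k_decomp k, ← hkd2]
        rw [geq]
        exact cdist_add_add _ _ _
      cases hB : ob (Qm k')
      · rw [hB, Bool.cond_false, pos4_idxB (by omega) (by omega)] at hlow
        have hpv := hp'val.2 hB
        rw [hpv] at hlow
        simp only [Nat.dist] at hlow hclow
        omega
      · rw [hB, Bool.cond_true, pos4_idxF (by omega) (by omega)] at hlow
        have hpv := hp'val.1 hB
        rw [hpv] at hlow
        simp only [Nat.dist] at hlow hclow
        omega
    · have helse : Gpot n (ed (Qm k')) p' (liftFun n M f ed ob k) =
          min (Fpot n ((laakso n).src (ed (Qm k'))) (liftFun n M f ed ob k) + p')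
              (Fpot n ((laakso n).tgt (ed (Qm k'))) (liftFun n M f ed ob k) + (4 - p')) := by
        by_cases h0 : Rm k = 0
        · rw [heval0 k h0]; exact Gpot_inl n _ _ _
        · have hqq : Qm k ≠ Qm k' := by tauto
          have hne : ed (Qm k) ≠ ed (Qm k') := fun hh => hqq (edinj _ _ hh)
          rw [heval1 k h0]; exact Gpot_inr_ne n _ _ hne _
      rw [helse] at hlow
      have hcb := circle_bound (M := M) hM1 (Qm k) (Qm k') (r := Rm k) (r' := Rm k')
        (by omega) (by omega)
      have geq : cdist k k' = cdist (Iota (Qm k) + ((Rm k : ℕ) : ZMod (4 * M)))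
          (Iota (Qm k') + ((Rm k' : ℕ) : ZMod (4 * M))) := by
        rw [← k_decomp k, ← k_decomp k']
      rw [geq]
      cases hB : ob (Qm k')
      · obtain ⟨s1, s2⟩ := (hsrc (Qm k')).2 hB
        rw [s1, s2, Feval, Feval] at hlow
        simp only [hdist] at hlow
        have hpv := hp'val.2 hB
        rw [hpv] at hlow
        omega
      · obtain ⟨s1, s2⟩ := (hsrc (Qm k')).1 hB
        rw [s1, s2, Feval, Feval] at hlow
        simp only [hdist] at hlow
        have hpv := hp'val.1 hB
        rw [hpv] at hlow
        omega

/-! ### the base cycle of length 4 -/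

lemma not_adj_ad {n : ℕ} (e : (laakso n).E) :
    ¬ (LaaksoGraph (n+1)).Adj (Sum.inr (e, (0 : Fin 4))) (Sum.inr (e, (3 : Fin 4))) := by
  rintro ⟨hne, e', hor⟩
  obtain ⟨e0, j⟩ := e'
  rcases src_tgt_cases e0 j with ⟨hS, hT⟩|⟨hS, hT⟩|⟨hS, hT⟩|⟨hS, hT⟩|⟨hS, hT⟩|⟨hS, hT⟩ <;>
    rcases hor with ⟨h1, h2⟩|⟨h1, h2⟩ <;> rw [hS] at h1 <;> rw [hT] at h2 <;>
    first
      | exact inl_ne_inr h1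
      | exact inl_ne_inr h2
      | (have c1 := congrArg (Prod.snd : (laakso n).E × Fin 4 → Fin 4) (Sum.inr.inj h1)
         have c2 := congrArg (Prod.snd : (laakso n).E × Fin 4 → Fin 4) (Sum.inr.inj h2)
         dsimp only at c1 c2
         first
           | exact absurd c1 (by decide)
           | exact absurd c2 (by decide))

lemma not_adj_bc {n : ℕ} (e : (laakso n).E) :
    ¬ (LaaksoGraph (n+1)).Adj (Sum.inr (e, (1 : Fin 4))) (Sum.inr (e, (2 : Fin 4))) := by
  rintro ⟨hne, e', hor⟩
  obtain ⟨e0, j⟩ := e'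
  rcases src_tgt_cases e0 j with ⟨hS, hT⟩|⟨hS, hT⟩|⟨hS, hT⟩|⟨hS, hT⟩|⟨hS, hT⟩|⟨hS, hT⟩ <;>
    rcases hor with ⟨h1, h2⟩|⟨h1, h2⟩ <;> rw [hS] at h1 <;> rw [hT] at h2 <;>
    first
      | exact inl_ne_inr h1
      | exact inl_ne_inr h2
      | (have c1 := congrArg (Prod.snd : (laakso n).E × Fin 4 → Fin 4) (Sum.inr.inj h1)
         have c2 := congrArg (Prod.snd : (laakso n).E × Fin 4 → Fin 4) (Sum.inr.inj h2)
         dsimp only at c1 c2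
         first
           | exact absurd c1 (by decide)
           | exact absurd c2 (by decide))

lemma base (n : ℕ) :
    ∃ f : ZMod 4 → (laakso (n + 1)).V,
      Function.Injective f ∧ (∀ i, (LaaksoGraph (n + 1)).Adj (f i) (f (i + 1))) ∧
      (∀ i j, (LaaksoGraph (n + 1)).dist (f i) (f j) = cdist i j) := by
  obtain ⟨e⟩ := E_nonempty n
  have hidx : Function.Injective (![0, 1, 3, 2] : Fin 4 → Fin 4) := by decide
  set g : ZMod 4 → (laakso (n + 1)).V :=
    fun i => Sum.inr (e, (![0, 1, 3, 2] : Fin 4 → Fin 4) i) with hg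
  have hginj : Function.Injective g := by
    intro i j h
    exact hidx (congrArg (Prod.snd : (laakso n).E × Fin 4 → Fin 4) (Sum.inr.inj h))
  have hgadj : ∀ i, (LaaksoGraph (n + 1)).Adj (g i) (g (i + 1)) := by
    intro i
    fin_cases i
    · exact adj_ab e
    · exact adj_bd e
    · exact (adj_cd e).symm
    · exact (adj_ac e).symm
  refine ⟨g, hginj, hgadj, ?_⟩
  intro i j
  refine le_antisymm (chain_dist_le g hgadj i j) ?_
  by_cases hij : i = j
  · subst hij; simp [cdist_self]
  · have hne : g i ≠ g j := fun hh => hij (hginj hh)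
    have h1 : 1 ≤ (LaaksoGraph (n + 1)).dist (g i) (g j) :=
      (laakso_connected (n + 1)).pos_dist_of_ne hne
    by_cases h2 : cdist i j ≤ 1
    · omega
    · have hc2 : cdist i j = 2 := by
        have hbound : ∀ a b : ZMod 4, cdist a b ≤ 2 := by decide
        have := hbound i j; omega
      have hkey : (i = 0 ∧ j = 2) ∨ (i = 2 ∧ j = 0) ∨ (i = 1 ∧ j = 3) ∨ (i = 3 ∧ j = 1) := by
        have hk : ∀ a b : ZMod 4, cdist a b = 2 →
            (a = 0 ∧ b = 2) ∨ (a = 2 ∧ b = 0) ∨ (a = 1 ∧ b = 3) ∨ (a = 3 ∧ b = 1) := by decide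
        exact hk i j hc2
      have hnadj : ¬ (LaaksoGraph (n + 1)).Adj (g i) (g j) := by
        rcases hkey with ⟨rfl, rfl⟩ | ⟨rfl, rfl⟩ | ⟨rfl, rfl⟩ | ⟨rfl, rfl⟩
        · exact not_adj_ad e
        · exact fun hh => not_adj_ad e hh.symm
        · exact not_adj_bc e
        · exact fun hh => not_adj_bc e hh.symm
      have hd1 : (LaaksoGraph (n + 1)).dist (g i) (g j) ≠ 1 := fun hh =>
        hnadj (SimpleGraph.dist_eq_one_iff_adj.mp hh)
      omega


/-! ### the main inductive construction -/

lemma main (n h : ℕ) (h1 : 1 ≤ h) (hh : h ≤ n) :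
    ∃ f : ZMod (4 ^ h) → (laakso n).V, Function.Injective f ∧
      (∀ i, (LaaksoGraph n).Adj (f i) (f (i + 1))) ∧
      (∀ i j, (LaaksoGraph n).dist (f i) (f j) = cdist i j) := by
  induction n generalizing h with
  | zero => omega
  | succ n ih =>
    rcases Nat.lt_or_ge h 2 with h2 | h2
    · have he1 : h = 1 := by omega
      subst he1
      rw [pow_one]
      exact base n
    · obtain ⟨h', rfl⟩ : ∃ h', h = h' + 1 := ⟨h - 1, by omega⟩
      obtain ⟨f, hfi, hfa, hfd⟩ := ih h' (by omega) (by omega)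
      have hM : 3 ≤ 4 ^ h' := by
        have h4 : 4 ≤ 4 ^ h' := by
          calc 4 = 4 ^ 1 := (pow_one 4).symm
            _ ≤ 4 ^ h' := Nat.pow_le_pow_right (by norm_num) (by omega)
        omega
      obtain ⟨f', hf⟩ := lift n (4 ^ h') hM f hfi hfa hfd
      rw [show 4 ^ (h' + 1) = 4 * 4 ^ h' from by ring]
      exact ⟨f', hf⟩

end LK

/-- For every `n ≥ 1` and every `h ∈ {1, …, n}` the Laakso graph `L_n`
contains an isometric cycle of length `4^h`: a cycle subgraph `C` with `4^h` vertices such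
that for all vertices `u, v` of `C` the distance in `L_n` equals the distance in `C`. -/
theorem laakso_contains_isometric_cycles (n h : ℕ) (hn : 1 ≤ n) (h1 : 1 ≤ h) (hh : h ≤ n) :
    ∃ C : (LaaksoGraph n).Subgraph, IsCycleSubgraph C ∧ C.verts.ncard = 4 ^ h ∧
      ∀ (u v : (laakso n).V) (hu : u ∈ C.verts) (hv : v ∈ C.verts),
        (LaaksoGraph n).dist u v = C.coe.dist ⟨u, hu⟩ ⟨v, hv⟩ := by
  classical
  obtain ⟨f, hinj, hadjf, hdistf⟩ := LK.main n h h1 hh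
  haveI : NeZero (4 ^ h) := ⟨by positivity⟩
  have hM4 : 4 ≤ 4 ^ h := by
    calc 4 = 4 ^ 1 := (pow_one 4).symm
      _ ≤ 4 ^ h := Nat.pow_le_pow_right (by norm_num) (by omega)
  have h2ne : (2 : ZMod (4 ^ h)) ≠ 0 := by
    intro hx
    rw [show (2 : ZMod (4 ^ h)) = ((2 : ℕ) : ZMod (4 ^ h)) by push_cast; ring,
      ZMod.natCast_eq_zero_iff] at hx
    have := Nat.le_of_dvd (by norm_num) hx
    omega
  let C : (LaaksoGraph n).Subgraph :=
    { verts := Set.range f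
      Adj := fun x y => ∃ i, (x = f i ∧ y = f (i + 1)) ∨ (x = f (i + 1) ∧ y = f i)
      adj_sub := by
        rintro x y ⟨i, (⟨rfl, rfl⟩ | ⟨rfl, rfl⟩)⟩
        · exact hadjf i
        · exact (hadjf i).symm
      edge_vert := by
        rintro x y ⟨i, (⟨rfl, rfl⟩ | ⟨rfl, rfl⟩)⟩
        · exact ⟨i, rfl⟩
        · exact ⟨i + 1, rfl⟩
      symm := ⟨by
        rintro x y ⟨i, (⟨h1, h2⟩ | ⟨h1, h2⟩)⟩
        · exact ⟨i, Or.inr ⟨h2, h1⟩⟩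
        · exact ⟨i, Or.inl ⟨h2, h1⟩⟩⟩ }
  have hgmem : ∀ i : ZMod (4 ^ h), f i ∈ C.verts := fun i => ⟨i, rfl⟩
  let g : ZMod (4 ^ h) → C.verts := fun i => ⟨f i, hgmem i⟩
  have hgadj : ∀ i, C.coe.Adj (g i) (g (i + 1)) := fun i => ⟨i, Or.inl ⟨rfl, rfl⟩⟩
  have hconn : C.Connected := by
    rw [SimpleGraph.Subgraph.connected_iff]
    constructor
    · rw [SimpleGraph.Subgraph.preconnected_iff]
      rintro ⟨x, hx⟩ ⟨y, hy⟩
      obtain ⟨i, rfl⟩ := hx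
      obtain ⟨j, rfl⟩ := hy
      exact LKaux.chain_reachable g hgadj i j
    · exact ⟨f 0, hgmem 0⟩
  have hdeg : ∀ v ∈ C.verts, (C.neighborSet v).ncard = 2 := by
    intro v hv
    obtain ⟨i, rfl⟩ := hv
    have hset : C.neighborSet (f i) = {f (i - 1), f (i + 1)} := by
      ext w
      constructor
      · rintro ⟨jj, (⟨hx, rfl⟩ | ⟨hx, rfl⟩)⟩
        · have hij : i = jj := hinj hx
          subst hij
          exact Or.inr rfl
        · have hij : jj = i - 1 := by
            have h5 : i = jj + 1 := hinj hx
            rw [h5]; ring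
          rw [hij]
          exact Or.inl rfl
      · rintro (rfl | rfl)
        · exact ⟨i - 1, Or.inr ⟨by rw [sub_add_cancel], rfl⟩⟩
        · exact ⟨i, Or.inl ⟨rfl, rfl⟩⟩
    rw [hset, Set.ncard_pair]
    intro hfe
    have h5 : i - 1 = i + 1 := hinj hfe
    exact h2ne (by linear_combination - h5)
  refine ⟨C, ⟨hconn, hdeg⟩, ?_, ?_⟩
  · show (Set.range f).ncard = 4 ^ h
    rw [← Set.image_univ, Set.ncard_image_of_injective _ hinj, Set.ncard_univ, Nat.card_zmod]
  · intro u v hu hv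
    have hu' := hu
    have hv' := hv
    obtain ⟨i, hfi⟩ := hu'
    obtain ⟨j, hfj⟩ := hv'
    subst hfi
    subst hfj
    have d1 : (LaaksoGraph n).dist (f i) (f j) = LKaux.cdist i j := hdistf i j
    have d2 : C.coe.dist ⟨f i, hu⟩ ⟨f j, hv⟩ ≤ LKaux.cdist i j :=
      LKaux.chain_dist_le g hgadj i j
    have d3 : (LaaksoGraph n).dist (f i) (f j) ≤ C.coe.dist ⟨f i, hu⟩ ⟨f j, hv⟩ := by
      obtain ⟨W, hW⟩ :=
        (LKaux.chain_reachable g hgadj i j).exists_walk_length_eq_dist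
      have hle := SimpleGraph.dist_le (W.map C.hom)
      rwa [SimpleGraph.Walk.length_map, hW] at hle
    omega
end

section
/- For the unweighted diamond graphs, the natural inclusion of vertex sets V(D_n) ⊆ V(D_{n+1}) multiplies all distances by exactly 2: for all u, v ∈ V(D_n), d_{D_{n+1}}(u,v) = 2·d_{D_n}(u,v). Equivalently, for the weighted diamonds (each edge of D_n given length 2^{-n}) the identity map D_{n} → D_{n+1} is an isometry on V(D_n). -/
theorem EGraph.toSimpleGraph_adj_iff (G : EGraph) {u v : G.V} :
    G.toSimpleGraph.Adj u v ↔
      u ≠ v ∧ ∃ e, (G.src e = u ∧ G.tgt e = v) ∨ (G.src e = v ∧ G.tgt e = u) := Iff.rfl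


lemma diamond_adj_step (n : ℕ) (e : (diamond n).E) (b : Bool) :
    (DiamondGraph (n+1)).Adj (Sum.inl ((diamond n).src e)) (Sum.inr (e, b)) := by
  cases b
  · exact (EGraph.toSimpleGraph_adj_iff _).2 ⟨Sum.inl_ne_inr, ⟨(e, 0), Or.inl ⟨rfl, rfl⟩⟩⟩
  · exact (EGraph.toSimpleGraph_adj_iff _).2 ⟨Sum.inl_ne_inr, ⟨(e, 2), Or.inl ⟨rfl, rfl⟩⟩⟩

lemma diamond_adj_step2 (n : ℕ) (e : (diamond n).E) (b : Bool) :
    (DiamondGraph (n+1)).Adj (Sum.inr (e, b)) (Sum.inl ((diamond n).tgt e)) := by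
  cases b
  · exact (EGraph.toSimpleGraph_adj_iff _).2 ⟨Sum.inr_ne_inl, ⟨(e, 1), Or.inl ⟨rfl, rfl⟩⟩⟩
  · exact (EGraph.toSimpleGraph_adj_iff _).2 ⟨Sum.inr_ne_inl, ⟨(e, 3), Or.inl ⟨rfl, rfl⟩⟩⟩

lemma diamond_adj_inl {n : ℕ} {u : (diamond n).V} {x : (diamond (n+1)).V}
    (h : (DiamondGraph (n+1)).Adj (Sum.inl u) x) :
    ∃ e b, x = Sum.inr (e, b) ∧ ((diamond n).src e = u ∨ (diamond n).tgt e = u) := by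
  obtain ⟨hne, ⟨e, i⟩, he⟩ := (EGraph.toSimpleGraph_adj_iff _).1 h
  fin_cases i <;> rcases he with ⟨h1, h2⟩ | ⟨h1, h2⟩ <;>
    simp [diamond, show ((3:Fin 4):ℕ) = 3 from rfl] at h1 h2 <;>
    first
      | exact ⟨e, _, h2.symm, Or.inl h1⟩
      | exact ⟨e, _, h1.symm, Or.inr h2⟩

lemma diamond_adj_inr {n : ℕ} {e : (diamond n).E} {b : Bool} {x : (diamond (n+1)).V}
    (h : (DiamondGraph (n+1)).Adj (Sum.inr (e, b)) x) :
    ∃ w, x = Sum.inl w ∧ ((diamond n).src e = w ∨ (diamond n).tgt e = w) := by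
  obtain ⟨hne, ⟨f, i⟩, he⟩ := (EGraph.toSimpleGraph_adj_iff _).1 h
  fin_cases i <;> rcases he with ⟨h1, h2⟩ | ⟨h1, h2⟩ <;>
    simp [diamond, show ((3:Fin 4):ℕ) = 3 from rfl] at h1 h2 <;>
    first
      | exact ⟨_, h2.symm, h1.1 ▸ Or.inl rfl⟩
      | exact ⟨_, h1.symm, h2.1 ▸ Or.inl rfl⟩
      | exact ⟨_, h2.symm, h1.1 ▸ Or.inr rfl⟩

lemma diamond_lift {n : ℕ} {u v : (diamond n).V} (p : (DiamondGraph n).Walk u v) :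
    ∃ q : (DiamondGraph (n+1)).Walk (Sum.inl u) (Sum.inl v), q.length = 2 * p.length := by
  induction p with
  | nil => exact ⟨.nil, rfl⟩
  | @cons a c v h p ih =>
    obtain ⟨q, hq⟩ := ih
    obtain ⟨hne, e, ⟨h1, h2⟩ | ⟨h1, h2⟩⟩ := (EGraph.toSimpleGraph_adj_iff _).1 h
    · subst h1; subst h2
      exact ⟨.cons (diamond_adj_step n e false) (.cons (diamond_adj_step2 n e false) q),
        by show q.length + 1 + 1 = 2 * (p.length + 1); omega⟩
    · subst h1; subst h2
      exact ⟨.cons (diamond_adj_step2 n e false).symm (.cons (diamond_adj_step n e false).symm q),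
        by show q.length + 1 + 1 = 2 * (p.length + 1); omega⟩

lemma diamond_project {n : ℕ} (m : ℕ) : ∀ {u v : (diamond n).V}
    (q : (DiamondGraph (n+1)).Walk (Sum.inl u) (Sum.inl v)), q.length ≤ m →
    ∃ p : (DiamondGraph n).Walk u v, 2 * p.length ≤ q.length := by
  induction m with
  | zero =>
    intro u v q hq
    cases q with
    | nil => exact ⟨.nil, by simp⟩
    | cons h q' => exact absurd hq (Nat.not_succ_le_zero _)
  | succ m ih =>
    intro u v q hq
    cases q with
    | nil => exact ⟨.nil, by simp⟩
    | cons h q' =>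
      obtain ⟨e, b, rfl, hu⟩ := diamond_adj_inl h
      cases q' with
      | cons h' q'' =>
        obtain ⟨w, rfl, hw⟩ := diamond_adj_inr h'
        obtain ⟨p, hp⟩ := ih q'' (Nat.le_of_succ_le_succ (Nat.le_of_succ_le hq))
        by_cases huw : u = w
        · subst huw; exact ⟨p, Nat.le_succ_of_le (Nat.le_succ_of_le hp)⟩
        · refine ⟨.cons ((EGraph.toSimpleGraph_adj_iff _).2 ⟨huw, e, ?_⟩) p, le_trans (le_of_eq (congrArg (2 * ·) (SimpleGraph.Walk.length_cons _ p))) (le_trans (le_of_eq (Nat.mul_succ 2 p.length)) (Nat.add_le_add_right hp 2))⟩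
          rcases hu with hu | hu <;> rcases hw with hw | hw
          · exact absurd (hu.symm.trans hw) huw
          · exact Or.inl ⟨hu, hw⟩
          · exact Or.inr ⟨hw, hu⟩
          · exact absurd (hu.symm.trans hw) huw

/-- The natural inclusion `V(D_n) ⊆ V(D_{n+1})` multiplies all
distances by exactly `2`; equivalently, for the weighted diamonds (each edge of `D_n` of
length `2^{-n}`) the identity map `D_n → D_{n+1}` is an isometry on `V(D_n)`. -/
theorem diamond_inclusion_doubles_distances (n : ℕ) (u v : (diamond n).V) :
    (DiamondGraph (n + 1)).dist (Sum.inl u) (Sum.inl v) = 2 * (DiamondGraph n).dist u v := by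
  by_cases hr : (DiamondGraph n).Reachable u v
  · obtain ⟨p, hp⟩ := hr.exists_walk_length_eq_dist
    obtain ⟨q, hq⟩ := diamond_lift p
    have h1 : (DiamondGraph (n+1)).dist (Sum.inl u) (Sum.inl v) ≤ 2 * (DiamondGraph n).dist u v := by
      rw [← hp, ← hq]; exact SimpleGraph.dist_le q
    have hr' : (DiamondGraph (n+1)).Reachable (Sum.inl u) (Sum.inl v) := ⟨q⟩
    obtain ⟨q', hq'⟩ := hr'.exists_walk_length_eq_dist
    obtain ⟨p', hp'⟩ := diamond_project q'.length q' le_rfl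
    have h2 : (DiamondGraph n).dist u v ≤ p'.length := SimpleGraph.dist_le p'
    omega
  · have hr' : ¬ (DiamondGraph (n+1)).Reachable (Sum.inl u) (Sum.inl v) := by
      rintro ⟨q⟩
      obtain ⟨p, -⟩ := diamond_project q.length q le_rfl
      exact hr ⟨p⟩
    rw [SimpleGraph.dist_eq_zero_of_not_reachable hr',
      SimpleGraph.dist_eq_zero_of_not_reachable hr]
end

section
/- Let k ≥ 1 be an integer and N ≥ 4^{10(k+1)} a real number. Let a_0, a_1, …, a_Q be points of the circle ℝ/Nℤ (with its arc-length metric d), where Q ≥ 4^k + ⌈4^{9k}/2⌉, such that for all indices 0 ≤ r < r' ≤ Q with r' − r ≤ N/16 one has (r' − r) ≤ d(a_r, a_{r'}) ≤ 4^k·(r' − r). For each i let t_i ∈ (−N/2, N/2] be the representative of a_i − a_0. Then all the numbers t_i for 4^k ≤ i ≤ 4^k + ⌈4^{9k}/2⌉ have the same sign; i.e., the points a_{4^k}, a_{4^k+1}, …, a_{4^k+⌈4^{9k}/2⌉} all lie on the same side of a_0. -/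
/-- Let `k ≥ 1` and `N ≥ 4^{10(k+1)}`.  Let `a_0, …, a_Q` be points of
the circle `ℝ/Nℤ` (with its arc-length metric), with `Q ≥ 4^k + 4^{9k}/2`, such that
`(r' − r) ≤ dist (a_r) (a_{r'}) ≤ 4^k·(r' − r)` whenever `r < r'` and `r' − r ≤ N/16`.
For each `i` let `t i ∈ (−N/2, N/2]` be the representative of `a_i − a_0`.  Then all the
numbers `t i` for `4^k ≤ i ≤ 4^k + 4^{9k}/2` have the same sign, i.e. the corresponding
points all lie on the same side of `a_0`. -/
theorem equally_spaced_points_on_same_side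
    (k : ℕ) (hk : 1 ≤ k) (N : ℝ) [Fact (0 < N)] (hN : (4 : ℝ) ^ (10 * (k + 1)) ≤ N)
    (Q : ℕ) (hQ : 4 ^ k + 4 ^ (9 * k) / 2 ≤ Q)
    (a : ℕ → AddCircle N)
    (ha : ∀ r r' : ℕ, r < r' → r' ≤ Q → ((r' - r : ℕ) : ℝ) ≤ N / 16 →
      ((r' - r : ℕ) : ℝ) ≤ dist (a r) (a r') ∧
      dist (a r) (a r') ≤ 4 ^ k * ((r' - r : ℕ) : ℝ)) :
    (∀ i : ℕ, 4 ^ k ≤ i → i ≤ 4 ^ k + 4 ^ (9 * k) / 2 →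
      0 < ((AddCircle.equivIoc N (-(N / 2)) (a i - a 0)) : ℝ)) ∨
    (∀ i : ℕ, 4 ^ k ≤ i → i ≤ 4 ^ k + 4 ^ (9 * k) / 2 →
      ((AddCircle.equivIoc N (-(N / 2)) (a i - a 0)) : ℝ) < 0) := by
  have hN0 : (0:ℝ) < N := Fact.out
  have hNne : N ≠ 0 := ne_of_gt hN0
  set M : ℕ := 4 ^ k + 4 ^ (9 * k) / 2 with hMdef
  set t : ℕ → ℝ := fun i => ((AddCircle.equivIoc N (-(N / 2)) (a i - a 0)) : ℝ) with htdef
  -- numeric facts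
  have hK1 : (1:ℝ) ≤ (4:ℝ) ^ k := one_le_pow₀ (by norm_num)
  have hK0 : (0:ℝ) < (4:ℝ) ^ k := lt_of_lt_of_le one_pos hK1
  have hNbig : (4:ℝ) ^ (10 * k + 10) ≤ N := by
    have : 10 * (k + 1) = 10 * k + 10 := by ring
    rwa [this] at hN
  have hMr : (M : ℝ) ≤ (4:ℝ) ^ (9 * k) := by
    have h1 : ((4 ^ (9 * k) / 2 : ℕ) : ℝ) ≤ ((4:ℝ) ^ (9 * k)) / 2 := by
      have := Nat.cast_div_le (m := 4 ^ (9 * k)) (n := 2) (α := ℝ)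
      push_cast at this ⊢
      linarith
    have h2 : (4:ℝ) ^ k ≤ ((4:ℝ) ^ (9 * k)) / 2 := by
      have hp : (4:ℝ) ^ (k + 1) ≤ (4:ℝ) ^ (9 * k) :=
        pow_le_pow_right₀ (by norm_num) (by omega)
      have : (4:ℝ) ^ (k + 1) = 4 * (4:ℝ) ^ k := by ring
      linarith
    have : (M : ℝ) = (4:ℝ) ^ k + ((4 ^ (9 * k) / 2 : ℕ) : ℝ) := by
      rw [hMdef]; push_cast; ring
    linarith
  have hMN16 : (M : ℝ) ≤ N / 16 := by
    have h1 : (16:ℝ) * (4:ℝ) ^ (9 * k) = (4:ℝ) ^ (9 * k + 2) := by ring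
    have h2 : (4:ℝ) ^ (9 * k + 2) ≤ (4:ℝ) ^ (10 * k + 10) :=
      pow_le_pow_right₀ (by norm_num) (by omega)
    linarith
  have hone16 : (1:ℝ) ≤ N / 16 := by
    have : (16:ℝ) ≤ (4:ℝ) ^ (10 * k + 10) := by
      calc (16:ℝ) = 4 ^ 2 := by norm_num
      _ ≤ (4:ℝ) ^ (10 * k + 10) := pow_le_pow_right₀ (by norm_num) (by omega)
    linarith
  -- basic properties of t
  have htmem : ∀ i, t i ∈ Set.Ioc (-(N/2)) (-(N/2) + N) := fun i =>
    (AddCircle.equivIoc N (-(N/2)) (a i - a 0)).2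
  have htabs : ∀ i, |t i| ≤ N / 2 := by
    intro i
    obtain ⟨h1, h2⟩ := htmem i
    rw [abs_le]
    constructor <;> linarith
  have hcoe : ∀ i, ((t i : ℝ) : AddCircle N) = a i - a 0 := fun i =>
    (AddCircle.equivIoc N (-(N/2))).symm_apply_apply (a i - a 0)
  have hdist0 : ∀ i, dist (a 0) (a i) = |t i| := by
    intro i
    rw [dist_comm, dist_eq_norm, ← hcoe i]
    exact (AddCircle.norm_coe_eq_abs_iff N hNne).mpr (by rw [abs_of_pos hN0]; exact htabs i)
  -- bounds on |t i| for i in range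
  have htbound : ∀ i : ℕ, 4 ^ k ≤ i → i ≤ M → (i : ℝ) ≤ |t i| ∧ |t i| ≤ (4:ℝ) ^ k * i := by
    intro i hi him
    have hi0 : 0 < i := lt_of_lt_of_le (Nat.pow_pos (by norm_num : 0 < 4)) hi
    have hiM : (i : ℝ) ≤ (M : ℝ) := Nat.cast_le.mpr him
    have := ha 0 i hi0 (le_trans him hQ) (by simpa using le_trans hiM hMN16)
    simpa [hdist0 i] using this
  have htne : ∀ i : ℕ, 4 ^ k ≤ i → i ≤ M → t i ≠ 0 := by
    intro i hi him h0
    have h := (htbound i hi him).1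
    have hi' : (1:ℝ) ≤ (i:ℝ) := by
      exact_mod_cast Nat.one_le_cast.mpr (le_trans (Nat.one_le_pow _ _ (by norm_num)) hi)
    rw [h0, abs_zero] at h
    linarith
  -- key norm lower bound on the circle
  have key : ∀ δ : ℝ, ‖(δ : AddCircle N)‖ ≤ (4:ℝ) ^ k →
      |δ| ≤ (4:ℝ) ^ k ∨ N - (4:ℝ) ^ k ≤ |δ| := by
    intro δ h
    rw [AddCircle.norm_eq N] at h
    rcases eq_or_ne (round (N⁻¹ * δ)) 0 with hm | hm
    · left; simpa [hm] using h
    · right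
      have h1 : (1:ℝ) ≤ |((round (N⁻¹ * δ) : ℤ) : ℝ)| := by
        have := Int.one_le_abs hm
        exact_mod_cast this
      have h2 : N ≤ |((round (N⁻¹ * δ) : ℤ) : ℝ) * N| := by
        rw [abs_mul, abs_of_pos hN0]
        nlinarith
      have h3 : |((round (N⁻¹ * δ) : ℤ) : ℝ) * N| - |δ - ((round (N⁻¹ * δ) : ℤ) : ℝ) * N| ≤ |δ| := by
        have := abs_sub_abs_le_abs_sub (((round (N⁻¹ * δ) : ℤ) : ℝ) * N) δ
        have habs : |((round (N⁻¹ * δ) : ℤ) : ℝ) * N - δ| = |δ - ((round (N⁻¹ * δ) : ℤ) : ℝ) * N| :=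
          abs_sub_comm _ _
        linarith [abs_sub_abs_le_abs_sub (((round (N⁻¹ * δ) : ℤ) : ℝ) * N) δ, habs ▸ this]
      linarith
  -- sign preservation step
  have hstep : ∀ i : ℕ, 4 ^ k ≤ i → i + 1 ≤ M → (0 < t i ↔ 0 < t (i + 1)) := by
    intro i hi him
    obtain ⟨hlo, hhi⟩ := htbound i hi (le_trans (Nat.le_succ i) him)
    obtain ⟨hlo', hhi'⟩ := htbound (i + 1) (by omega) him
    have hd : dist (a i) (a (i + 1)) ≤ (4:ℝ) ^ k := by
      have := (ha i (i + 1) (by omega) (le_trans him hQ)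
        (by simp; exact hone16)).2
      simpa using this
    have hdn : dist (a i) (a (i + 1)) = ‖((t (i+1) - t i : ℝ) : AddCircle N)‖ := by
      rw [dist_comm, dist_eq_norm]
      have hsub : ((t (i+1) - t i : ℝ) : AddCircle N)
          = ((t (i+1) : ℝ) : AddCircle N) - ((t i : ℝ) : AddCircle N) := rfl
      rw [hsub, hcoe, hcoe]
      abel_nf
    have hδ := key (t (i+1) - t i) (by rw [← hdn]; exact hd)
    -- rule out the wrap-around branch
    have hiM : (i : ℝ) ≤ (M : ℝ) := Nat.cast_le.mpr (le_trans (Nat.le_succ i) him)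
    have hsmall : |t (i+1) - t i| < N - (4:ℝ) ^ k := by
      have h1 : |t (i+1) - t i| ≤ |t (i+1)| + |t i| := abs_sub _ _
      have h2 : (4:ℝ) ^ k * ((i:ℝ) + 1) + (4:ℝ) ^ k * (i:ℝ) + (4:ℝ) ^ k < N := by
        have hKi : (4:ℝ) ^ k * (i:ℝ) ≤ (4:ℝ) ^ (10 * k) := by
          have : (4:ℝ) ^ k * (4:ℝ) ^ (9 * k) = (4:ℝ) ^ (10 * k) := by
            rw [← pow_add]; congr 1; ring
          nlinarith [le_trans hiM hMr]
        have hKA : (4:ℝ) ^ k ≤ (4:ℝ) ^ (10 * k) :=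
          pow_le_pow_right₀ (by norm_num) (by omega)
        have hAN : (4:ℝ) ^ (10 * k) * 1048576 ≤ N := by
          have : (4:ℝ) ^ (10 * k) * 1048576 = (4:ℝ) ^ (10 * k + 10) := by
            rw [pow_add]; norm_num
          linarith [this ▸ hNbig]
        have hA1 : (1:ℝ) ≤ (4:ℝ) ^ (10 * k) := one_le_pow₀ (by norm_num)
        nlinarith
      have hc1 : |t (i+1)| ≤ (4:ℝ) ^ k * ((i:ℝ) + 1) := by
        have : ((i + 1 : ℕ) : ℝ) = (i:ℝ) + 1 := by push_cast; ring
        linarith [this ▸ hhi']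
      linarith
    have hδ' : |t (i+1) - t i| ≤ (4:ℝ) ^ k := by
      rcases hδ with h | h
      · exact h
      · linarith
    -- conclude same sign
    have hKi' : (4:ℝ) ^ k ≤ (i:ℝ) := by
      exact_mod_cast Nat.cast_le.mpr hi |>.trans_eq' (by push_cast; ring)
    have hlo1 : (4:ℝ) ^ k ≤ |t i| := le_trans hKi' hlo
    have hlo2 : (4:ℝ) ^ k ≤ |t (i+1)| := by
      have : ((i + 1 : ℕ) : ℝ) = (i:ℝ) + 1 := by push_cast; ring
      linarith [this ▸ hlo']
    rw [abs_le] at hδ'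
    constructor
    · intro hpos
      by_contra hneg
      push_neg at hneg
      rw [abs_of_pos hpos] at hlo1
      rw [abs_of_nonpos hneg] at hlo2
      linarith [hδ'.1]
    · intro hpos
      by_contra hneg
      push_neg at hneg
      rw [abs_of_pos hpos] at hlo2
      rw [abs_of_nonpos hneg] at hlo1
      linarith [hδ'.2]
  -- propagate sign from i = 4^k
  have hiff : ∀ i : ℕ, 4 ^ k ≤ i → i ≤ M → (0 < t i ↔ 0 < t (4 ^ k)) := by
    intro i hi
    induction i, hi using Nat.le_induction with
    | base => intro _; rfl
    | succ n hn ih =>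
      intro hnM
      rw [← hstep n hn hnM]
      exact ih (le_trans (Nat.le_succ n) hnM)
  have hbase : 4 ^ k ≤ M := Nat.le_add_right _ _
  rcases lt_trichotomy (t (4 ^ k)) 0 with hneg | hzero | hpos
  · right
    intro i hi him
    have := htne i hi him
    have h1 := (hiff i hi him)
    by_contra hge
    push_neg at hge
    have : 0 < t i := lt_of_le_of_ne hge (Ne.symm this)
    exact absurd (h1.mp this) (by linarith)
  · exact absurd hzero (htne (4 ^ k) le_rfl hbase)
  · left
    intro i hi him
    exact (hiff i hi him).mpr hpos
end

section
/- Let k ≥ 1 be an integer and N ≥ 4^{10(k+1)} a real number. Let a_0, a_1, …, a_Q be points of the circle ℝ/Nℤ (with its arc-length metric d) such that for all indices 0 ≤ r < r' ≤ Q with r' − r ≤ N/16 one has (r' − r) ≤ d(a_r, a_{r'}) ≤ 4^k·(r' − r). Set b_r = a_{r·4^k}. Then the points b_r are placed on the circle in their natural cyclic order: there is an orientation of the circle such that for every r with (r+2)·4^k + 4^{8k} ≤ Q, the point b_{r+1} lies on the (positively oriented) arc from b_r to b_{r+2}; in particular, for no r do the points occur in the cyclic order b_r, b_{r+2}, b_{r+1}.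 -/
open AddCircle

section helpers
variable (N : ℝ) [hF : Fact (0 < N)]

private lemma coe_equivIco_eq (x : AddCircle N) :
    (((AddCircle.equivIco N 0 x : ℝ)) : AddCircle N) = x := by
  conv_rhs => rw [← (AddCircle.equivIco N 0).symm_apply_apply x]
  rfl

private lemma equivIco_coe_of_mem {v : ℝ} (h : 0 ≤ v) (h' : v < N) :
    ((AddCircle.equivIco N 0 (v : AddCircle N)) : ℝ) = v := by
  have h2 : AddCircle.equivIco N 0 ((v : ℝ) : AddCircle N)
      = ⟨toIcoMod hF.out 0 v, toIcoMod_mem_Ico hF.out 0 v⟩ :=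
    QuotientAddGroup.equivIcoMod_coe hF.out 0 v
  rw [h2]
  exact (toIcoMod_eq_self hF.out).2 ⟨h, by rwa [zero_add]⟩

private lemma norm_coe_of_le {v : ℝ} (h : |v| ≤ N / 2) : ‖(v : AddCircle N)‖ = |v| := by
  refine (AddCircle.norm_coe_eq_abs_iff (p := N) (ne_of_gt hF.out)).2 ?_
  rwa [abs_of_pos hF.out]

private lemma rep_unique {v w : ℝ} (h : (v : AddCircle N) = (w : AddCircle N))
    (hb : |v - w| < N) : v = w := by
  have h1 : ((v - w : ℝ) : AddCircle N) = 0 := by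
    rw [AddCircle.coe_sub, h, sub_self]
  obtain ⟨n, hn⟩ := (AddCircle.coe_eq_zero_iff (p := N)).1 h1
  rw [zsmul_eq_mul] at hn
  by_cases hn0 : n = 0
  · rw [hn0] at hn; push_cast at hn; linarith [abs_nonneg (v - w), (by linarith : v - w = 0)]
  · exfalso
    have h2 : (1:ℝ) ≤ |(n:ℝ)| := by
      have := Int.one_le_abs (by omega : n ≠ 0)
      exact_mod_cast this
    have h3 : |v - w| = |(n:ℝ)| * N := by
      rw [← hn, abs_mul, abs_of_pos hF.out]
    nlinarith [hF.out]

/-- centered lift of `a i - a m` -/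
noncomputable def ylift (a : ℕ → AddCircle N) (m i : ℕ) : ℝ :=
  if ((AddCircle.equivIco N 0 (a i - a m)) : ℝ) ≤ N / 2
  then ((AddCircle.equivIco N 0 (a i - a m)) : ℝ)
  else ((AddCircle.equivIco N 0 (a i - a m)) : ℝ) - N

variable (a : ℕ → AddCircle N)

private lemma ylift_coe (m i : ℕ) : ((ylift N a m i : ℝ) : AddCircle N) = a i - a m := by
  by_cases hc : ((AddCircle.equivIco N 0 (a i - a m)) : ℝ) ≤ N / 2
  · rw [ylift, if_pos hc]
    exact coe_equivIco_eq N _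
  · rw [ylift, if_neg hc]
    have h3 := AddCircle.coe_add_period N (((AddCircle.equivIco N 0 (a i - a m)) : ℝ) - N)
    rw [sub_add_cancel] at h3
    rw [← h3]
    exact coe_equivIco_eq N _

private lemma ylift_abs_le (m i : ℕ) : |ylift N a m i| ≤ N / 2 := by
  have h0 : (0:ℝ) < N := hF.out
  obtain ⟨h1, h2⟩ := (AddCircle.equivIco N 0 (a i - a m)).2
  by_cases hc : ((AddCircle.equivIco N 0 (a i - a m)) : ℝ) ≤ N / 2
  · rw [ylift, if_pos hc, abs_le]; constructor <;> linarith
  · rw [ylift, if_neg hc, abs_le]; constructor <;> linarith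

private lemma ylift_dist (m i : ℕ) : dist (a m) (a i) = |ylift N a m i| := by
  rw [dist_comm, dist_eq_norm, ← ylift_coe N a m i, norm_coe_of_le N (ylift_abs_le N a m i)]

private lemma ylift_self (m : ℕ) : ylift N a m m = 0 := by
  have := ylift_dist N a m m
  rw [dist_self] at this
  exact abs_eq_zero.1 this.symm

private lemma ylift_dist_two {m i j : ℕ} (h : |ylift N a m j - ylift N a m i| ≤ N / 2) :
    dist (a i) (a j) = |ylift N a m j - ylift N a m i| := by
  have hc : ((ylift N a m j - ylift N a m i : ℝ) : AddCircle N) = a j - a i := by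
    rw [AddCircle.coe_sub, ylift_coe, ylift_coe]; abel
  rw [dist_comm, dist_eq_norm, ← hc, norm_coe_of_le N h]

end helpers


private lemma no_return_down (y : ℕ → ℝ) (L : ℝ) (t u M : ℕ)
    (hlow : ∀ i j : ℕ, t ≤ i → i < j → j ≤ M → ((j - i : ℕ) : ℝ) ≤ |y j - y i|)
    (hup : ∀ i : ℕ, t ≤ i → i + 1 ≤ M → |y (i + 1) - y i| ≤ L)
    (htu : t < u) (hL : L ≤ ((u - t : ℕ) : ℝ))
    (hyu : y u ≤ y t - L) :
    ∀ v : ℕ, u ≤ v → v ≤ M → y v ≤ y t - L := by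
  intro v hv
  induction v, hv using Nat.le_induction with
  | base => intro _; exact hyu
  | succ v hv ih =>
    intro hvM
    have ihv := ih (le_trans (Nat.le_succ v) hvM)
    have htv : t ≤ v := le_trans (le_of_lt htu) hv
    have hstep : |y (v + 1) - y v| ≤ L := hup v htv hvM
    have h1 : y (v + 1) ≤ y v + L := by
      have := abs_le.1 hstep
      linarith [this.2]
    by_contra hcon
    push_neg at hcon
    have hlow' := hlow t (v + 1) le_rfl (lt_of_le_of_lt htv (Nat.lt_succ_self v)) hvM
    have hcast : ((v + 1 - t : ℕ) : ℝ) = (v : ℝ) + 1 - (t : ℝ) := by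
      have : t ≤ v + 1 := le_trans htv (Nat.le_succ v)
      push_cast [Nat.cast_sub this]
      ring
    have hcast2 : ((u - t : ℕ) : ℝ) = (u : ℝ) - (t : ℝ) := by
      push_cast [Nat.cast_sub (le_of_lt htu)]
      ring
    have huv : (u : ℝ) ≤ (v : ℝ) := Nat.cast_le.2 hv
    have habs : |y (v + 1) - y t| < L := by
      rw [abs_lt]
      constructor <;> linarith
    rw [hcast] at hlow'
    rw [hcast2] at hL
    linarith

private lemma no_return_up (y : ℕ → ℝ) (L : ℝ) (t u M : ℕ)
    (hlow : ∀ i j : ℕ, t ≤ i → i < j → j ≤ M → ((j - i : ℕ) : ℝ) ≤ |y j - y i|)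
    (hup : ∀ i : ℕ, t ≤ i → i + 1 ≤ M → |y (i + 1) - y i| ≤ L)
    (htu : t < u) (hL : L ≤ ((u - t : ℕ) : ℝ))
    (hyu : y t + L ≤ y u) :
    ∀ v : ℕ, u ≤ v → v ≤ M → y t + L ≤ y v := by
  intro v hv hvM
  have key := no_return_down (fun i => -(y i)) L t u M
    (fun i j h1 h2 h3 => by
      have h4 := hlow i j h1 h2 h3
      calc ((j - i : ℕ) : ℝ) ≤ |y j - y i| := h4
        _ = |(-(y j)) - (-(y i))| := by rw [← abs_neg]; ring_nf
    )
    (fun i h1 h2 => by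
      have h4 := hup i h1 h2
      calc |(-(y (i+1))) - (-(y i))| = |y (i+1) - y i| := by rw [← abs_neg]; ring_nf
        _ ≤ L := h4
    )
    htu hL (by linarith) v hv hvM
  linarith

-- numeric facts
private lemma numfacts (k : ℕ) (hk : 1 ≤ k) (N : ℝ) (hN : (4:ℝ)^(10*(k+1)) ≤ N) :
    ((2 * 4^k + 4^(8*k) : ℕ) : ℝ) ≤ N / 16 ∧
    2 * ((4:ℝ)^k * ((2 * 4^k + 4^(8*k) : ℕ) : ℝ)) ≤ N / 2 ∧
    (4:ℝ)^k * (4:ℝ)^k - (4:ℝ)^k < ((2 * 4^k + 4^(8*k) : ℕ) : ℝ) ∧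
    (4:ℝ) ≤ (4:ℝ)^k := by
  have h4 : (1:ℝ) ≤ 4 := by norm_num
  have pmono : ∀ s t : ℕ, s ≤ t → (4:ℝ)^s ≤ 4^t := fun s t hst => pow_le_pow_right₀ h4 hst
  have hcast : ((2 * 4^k + 4^(8*k) : ℕ) : ℝ) = 2 * (4:ℝ)^k + (4:ℝ)^(8*k) := by push_cast; ring
  have h1 : (4:ℝ)^k ≤ 4^(8*k) := pmono k (8*k) (by omega)
  have h2 : (4:ℝ)^(8*k+3) ≤ 4^(10*(k+1)) := pmono _ _ (by omega)
  have h3 : (4:ℝ)^(9*k+2) ≤ 4^(10*(k+1)) := pmono _ _ (by omega)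
  have h2k8k : (4:ℝ)^(2*k) ≤ 4^(8*k) := pmono _ _ (by omega)
  have e1 : (4:ℝ)^(8*k+3) = 64 * 4^(8*k) := by rw [pow_add]; ring
  have e2 : (4:ℝ)^(9*k+2) = 16 * (4^k * 4^(8*k)) := by
    have : 9*k+2 = k + 8*k + 2 := by omega
    rw [this, pow_add, pow_add]; norm_num; ring
  have e3 : (4:ℝ)^(2*k) = 4^k * 4^k := by rw [two_mul, pow_add]
  have hp1 : (4:ℝ) ≤ (4:ℝ)^k := by calc (4:ℝ) = 4^1 := (pow_one 4).symm
                                        _ ≤ 4^k := pmono 1 k hk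
  have hpos : (0:ℝ) < 4^k := by positivity
  have hpos8 : (0:ℝ) < 4^(8*k) := by positivity
  refine ⟨?_, ?_, ?_, hp1⟩
  · rw [hcast]; nlinarith
  · rw [hcast]; nlinarith
  · rw [hcast]; nlinarith [e3 ▸ h2k8k]

private lemma window (k : ℕ) (hk : 1 ≤ k) (N : ℝ) [hF : Fact (0 < N)]
    (hN : (4:ℝ)^(10*(k+1)) ≤ N) (Q : ℕ) (a : ℕ → AddCircle N)
    (ha : ∀ r r' : ℕ, r < r' → r' ≤ Q → ((r' - r : ℕ) : ℝ) ≤ N / 16 →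
      ((r' - r : ℕ) : ℝ) ≤ dist (a r) (a r') ∧
      dist (a r) (a r') ≤ 4 ^ k * ((r' - r : ℕ) : ℝ))
    (m : ℕ) (hm : m + (2 * 4^k + 4^(8*k)) ≤ Q) :
    (0 ≤ ylift N a m (m + (2 * 4^k + 4^(8*k))) →
      ((4:ℝ)^k ≤ ylift N a m (m + 4^k) ∧
       ylift N a m (m + 4^k) + 4^k ≤ ylift N a m (m + 2 * 4^k))) ∧
    (ylift N a m (m + (2 * 4^k + 4^(8*k))) < 0 →
      (ylift N a m (m + 4^k) ≤ -(4:ℝ)^k ∧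
       ylift N a m (m + 2 * 4^k) ≤ ylift N a m (m + 4^k) - 4^k)) := by
  obtain ⟨nf1, nf2, nf3, nf4⟩ := numfacts k hk N hN
  set W : ℕ := 2 * 4^k + 4^(8*k) with hWdef
  set M : ℕ := m + W with hMdef
  set y : ℕ → ℝ := ylift N a m with hydef
  have hN0 : (0:ℝ) < N := hF.out
  have hym : y m = 0 := ylift_self N a m
  have hWpos : 0 < W := by positivity
  have hWcpos : (0:ℝ) < ((W:ℕ):ℝ) := by exact_mod_cast hWpos
  -- distance identities inside the window
  have habs : ∀ i : ℕ, m ≤ i → i ≤ M → |y i| ≤ 4^k * ((W : ℕ) : ℝ) := by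
    intro i h1 h2
    rcases Nat.eq_or_lt_of_le h1 with rfl | hlt
    · rw [hym, abs_zero]; positivity
    · have hgap : ((i - m : ℕ) : ℝ) ≤ ((W : ℕ) : ℝ) := by
        have : i - m ≤ W := by omega
        exact_mod_cast this
      have hd := (ha m i hlt (by omega) (le_trans hgap nf1)).2
      rw [ylift_dist N a m i] at hd
      calc |y i| ≤ 4^k * ((i - m : ℕ) : ℝ) := hd
        _ ≤ 4^k * ((W : ℕ) : ℝ) := by nlinarith [nf4]
  have hbound : ∀ i j : ℕ, m ≤ i → i < j → j ≤ M →
      ((j - i : ℕ) : ℝ) ≤ |y j - y i| ∧ |y j - y i| ≤ 4^k * ((j - i : ℕ) : ℝ) := by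
    intro i j h1 h2 h3
    have hdiff : |y j - y i| ≤ N / 2 := by
      have ha1 := habs i h1 (le_of_lt (lt_of_lt_of_le h2 h3))
      have ha2 := habs j (le_trans h1 (le_of_lt h2)) h3
      calc |y j - y i| ≤ |y j| + |y i| := abs_sub _ _
        _ ≤ N / 2 := by linarith
    have hde : dist (a i) (a j) = |y j - y i| := ylift_dist_two N a hdiff
    have hgap : ((j - i : ℕ) : ℝ) ≤ N / 16 := by
      refine le_trans ?_ nf1
      have : j - i ≤ W := by omega
      exact_mod_cast this
    have := ha i j h2 (by omega) hgap
    rw [hde] at this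
    exact this
  have hlow : ∀ i j : ℕ, m ≤ i → i < j → j ≤ M → ((j - i : ℕ) : ℝ) ≤ |y j - y i| :=
    fun i j h1 h2 h3 => (hbound i j h1 h2 h3).1
  have hup1 : ∀ i : ℕ, m ≤ i → i + 1 ≤ M → |y (i + 1) - y i| ≤ (4:ℝ)^k := by
    intro i h1 h2
    have := (hbound i (i+1) h1 (Nat.lt_succ_self i) h2).2
    simpa using this
  -- cast facts
  have hc1 : ((m + 4^k - m : ℕ) : ℝ) = (4:ℝ)^k := by
    rw [Nat.add_sub_cancel_left]; push_cast; ring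
  have hc2 : ((m + 2*4^k - (m + 4^k) : ℕ) : ℝ) = (4:ℝ)^k := by
    have : m + 2*4^k - (m + 4^k) = 4^k := by omega
    rw [this]; push_cast; ring
  have hcW : ((M - m : ℕ) : ℝ) = ((W:ℕ) : ℝ) := by rw [hMdef, Nat.add_sub_cancel_left]
  have hmlt : m < m + 4^k := by have : 0 < 4^k := Nat.pow_pos (by norm_num); omega
  have hmlt2 : m + 4^k < m + 2*4^k := by have : 0 < 4^k := Nat.pow_pos (by norm_num); omega
  have hleM1 : m + 4^k ≤ M := by
    show m + 4^k ≤ m + (2*4^k + 4^(8*k))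
    have hd8 : 0 < 4^(8*k) := Nat.pow_pos (by norm_num)
    omega
  have hleM2 : m + 2*4^k ≤ M := by
    show m + 2*4^k ≤ m + (2*4^k + 4^(8*k))
    have hd8 : 0 < 4^(8*k) := Nat.pow_pos (by norm_num)
    omega
  have hmM : m < M := by omega
  -- |y M| ≥ W
  have hyMabs : ((W:ℕ):ℝ) ≤ |y M| := by
    have := hlow m M le_rfl hmM le_rfl
    rwa [hym, sub_zero, hcW] at this
  -- |y1| ≥ 4^k, |y1| ≤ 4^k*4^k, |y2 - y1| ≥ 4^k
  have hy1low : (4:ℝ)^k ≤ |y (m + 4^k)| := by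
    have := hlow m (m + 4^k) le_rfl hmlt hleM1
    rwa [hym, sub_zero, hc1] at this
  have hy1up : |y (m + 4^k)| ≤ (4:ℝ)^k * 4^k := by
    have := (hbound m (m + 4^k) le_rfl hmlt hleM1).2
    rwa [hym, sub_zero, hc1] at this
  have hy21 : (4:ℝ)^k ≤ |y (m + 2*4^k) - y (m + 4^k)| := by
    have := hlow (m + 4^k) (m + 2*4^k) (by omega) hmlt2 hleM2
    rwa [hc2] at this
  constructor
  · -- positive far point
    intro h0
    have hyM : ((W:ℕ):ℝ) ≤ y M := by
      rcases abs_cases (y M) with ⟨he, _⟩ | ⟨he, hneg⟩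
      · rwa [he] at hyMabs
      · linarith [hyMabs]
    have hy1pos : 0 ≤ y (m + 4^k) := by
      by_contra hcon
      push_neg at hcon
      have h1 : y (m + 4^k) ≤ y m - 4^k := by
        rw [hym]
        rcases abs_cases (y (m + 4^k)) with ⟨he, _⟩ | ⟨he, _⟩
        · linarith
        · linarith
      have := no_return_down y ((4:ℝ)^k) m (m + 4^k) M hlow hup1 hmlt
        (by rw [hc1]) h1 M hleM1 le_rfl
      rw [hym] at this
      linarith [hyM, hWcpos, nf4]
    have hy1 : (4:ℝ)^k ≤ y (m + 4^k) := by
      rwa [abs_of_nonneg hy1pos] at hy1low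
    have hy2ge : y (m + 4^k) ≤ y (m + 2*4^k) := by
      by_contra hcon
      push_neg at hcon
      have h1 : y (m + 2*4^k) ≤ y (m + 4^k) - 4^k := by
        rcases abs_cases (y (m + 2*4^k) - y (m + 4^k)) with ⟨he, _⟩ | ⟨he, _⟩
        · linarith
        · linarith
      have hlow' : ∀ i j : ℕ, m + 4^k ≤ i → i < j → j ≤ M → ((j - i : ℕ) : ℝ) ≤ |y j - y i| :=
        fun i j h1 h2 h3 => hlow i j (le_trans (Nat.le_add_right m (4^k)) h1) h2 h3
      have hup1' : ∀ i : ℕ, m + 4^k ≤ i → i + 1 ≤ M → |y (i + 1) - y i| ≤ (4:ℝ)^k :=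
        fun i h1 h2 => hup1 i (le_trans (Nat.le_add_right m (4^k)) h1) h2
      have := no_return_down y ((4:ℝ)^k) (m + 4^k) (m + 2*4^k) M hlow' hup1' hmlt2
        (by rw [hc2]) h1 M hleM2 le_rfl
      have hy1abs : y (m + 4^k) ≤ (4:ℝ)^k * 4^k := le_trans (le_abs_self _) hy1up
      linarith [nf3, hyM, hy1abs]
    refine ⟨hy1, ?_⟩
    rcases abs_cases (y (m + 2*4^k) - y (m + 4^k)) with ⟨he, _⟩ | ⟨he, _⟩
    · linarith
    · linarith
  · -- negative far point
    intro h0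
    have hyM : y M ≤ -((W:ℕ):ℝ) := by
      rcases abs_cases (y M) with ⟨he, hp⟩ | ⟨he, _⟩
      · linarith
      · linarith
    have hy1neg : y (m + 4^k) ≤ 0 := by
      by_contra hcon
      push_neg at hcon
      have h1 : y m + 4^k ≤ y (m + 4^k) := by
        rw [hym]
        rcases abs_cases (y (m + 4^k)) with ⟨he, _⟩ | ⟨he, _⟩
        · linarith
        · linarith
      have := no_return_up y ((4:ℝ)^k) m (m + 4^k) M hlow hup1 hmlt
        (by rw [hc1]) h1 M hleM1 le_rfl
      rw [hym] at this
      linarith [hyM, hWcpos, nf4]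
    have hy1 : y (m + 4^k) ≤ -(4:ℝ)^k := by
      rcases abs_cases (y (m + 4^k)) with ⟨he, _⟩ | ⟨he, _⟩
      · linarith
      · linarith
    have hy2le : y (m + 2*4^k) ≤ y (m + 4^k) := by
      by_contra hcon
      push_neg at hcon
      have h1 : y (m + 4^k) + 4^k ≤ y (m + 2*4^k) := by
        rcases abs_cases (y (m + 2*4^k) - y (m + 4^k)) with ⟨he, _⟩ | ⟨he, _⟩
        · linarith
        · linarith
      have hlow' : ∀ i j : ℕ, m + 4^k ≤ i → i < j → j ≤ M → ((j - i : ℕ) : ℝ) ≤ |y j - y i| :=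
        fun i j h1 h2 h3 => hlow i j (le_trans (Nat.le_add_right m (4^k)) h1) h2 h3
      have hup1' : ∀ i : ℕ, m + 4^k ≤ i → i + 1 ≤ M → |y (i + 1) - y i| ≤ (4:ℝ)^k :=
        fun i h1 h2 => hup1 i (le_trans (Nat.le_add_right m (4^k)) h1) h2
      have := no_return_up y ((4:ℝ)^k) (m + 4^k) (m + 2*4^k) M hlow' hup1' hmlt2
        (by rw [hc2]) h1 M hleM2 le_rfl
      have hy1abs : -((4:ℝ)^k * 4^k) ≤ y (m + 4^k) := by
        have hna := neg_abs_le (y (m + 4^k))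
        linarith [hy1up]
      linarith [nf3, hyM, hy1abs]
    refine ⟨hy1, ?_⟩
    rcases abs_cases (y (m + 2*4^k) - y (m + 4^k)) with ⟨he, _⟩ | ⟨he, _⟩
    · linarith
    · linarith

private lemma consistency (k : ℕ) (hk : 1 ≤ k) (N : ℝ) [hF : Fact (0 < N)]
    (hN : (4:ℝ)^(10*(k+1)) ≤ N) (Q : ℕ) (a : ℕ → AddCircle N)
    (ha : ∀ r r' : ℕ, r < r' → r' ≤ Q → ((r' - r : ℕ) : ℝ) ≤ N / 16 →
      ((r' - r : ℕ) : ℝ) ≤ dist (a r) (a r') ∧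
      dist (a r) (a r') ≤ 4 ^ k * ((r' - r : ℕ) : ℝ))
    (m : ℕ) (hm : (m + 4^k) + (2 * 4^k + 4^(8*k)) ≤ Q) :
    (0 ≤ ylift N a m (m + (2 * 4^k + 4^(8*k))) ↔
     0 ≤ ylift N a (m + 4^k) ((m + 4^k) + (2 * 4^k + 4^(8*k)))) := by
  obtain ⟨nf1, nf2, nf3, nf4⟩ := numfacts k hk N hN
  have hN0 : (0:ℝ) < N := hF.out
  have hm0 : m + (2 * 4^k + 4^(8*k)) ≤ Q := by omega
  have hw := window k hk N hN Q a ha m hm0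
  have hw' := window k hk N hN Q a ha (m + 4^k) hm
  have hk4 : 0 < 4^k := Nat.pow_pos (by norm_num)
  have h8k : 0 < 4^(8*k) := Nat.pow_pos (by norm_num)
  -- the shared step
  set s : ℝ := ylift N a m (m + 2*4^k) - ylift N a m (m + 4^k) with hsdef
  set s' : ℝ := ylift N a (m + 4^k) ((m + 4^k) + 4^k) with hsdef'
  have hcoe : ((s : ℝ) : AddCircle N) = ((s' : ℝ) : AddCircle N) := by
    rw [hsdef, hsdef', AddCircle.coe_sub, ylift_coe, ylift_coe, ylift_coe]
    have e : (m + 4^k) + 4^k = m + 2*4^k := by omega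
    rw [e]
    abel
  -- magnitude bounds
  have habs1 : |ylift N a m (m + 4^k)| ≤ 4^k * ((4^k : ℕ) : ℝ) := by
    rw [← ylift_dist]
    have := (ha m (m + 4^k) (by omega) (by omega) ?_).2
    · rwa [Nat.add_sub_cancel_left] at this
    · rw [Nat.add_sub_cancel_left]
      refine le_trans ?_ nf1
      have : (4^k : ℕ) ≤ 2 * 4^k + 4^(8*k) := by omega
      exact_mod_cast this
  have habs2 : |ylift N a m (m + 2*4^k)| ≤ 4^k * ((2*4^k : ℕ) : ℝ) := by
    rw [← ylift_dist]
    have := (ha m (m + 2*4^k) (by omega) (by omega) ?_).2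
    · rwa [Nat.add_sub_cancel_left] at this
    · rw [Nat.add_sub_cancel_left]
      refine le_trans ?_ nf1
      have h8 : 0 < 4^(8*k) := Nat.pow_pos (by norm_num)
      have : (2*4^k : ℕ) ≤ 2 * 4^k + 4^(8*k) := by omega
      exact_mod_cast this
  have habs3 : |s'| ≤ 4^k * ((4^k : ℕ) : ℝ) := by
    rw [hsdef', ← ylift_dist]
    have := (ha (m + 4^k) ((m + 4^k) + 4^k) (by omega) (by omega) ?_).2
    · rwa [Nat.add_sub_cancel_left] at this
    · rw [Nat.add_sub_cancel_left]
      refine le_trans ?_ nf1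
      have : (4^k : ℕ) ≤ 2 * 4^k + 4^(8*k) := by omega
      exact_mod_cast this
  have hcast4 : ((4^k : ℕ) : ℝ) = (4:ℝ)^k := by push_cast; ring
  have hcast42 : ((2*4^k : ℕ) : ℝ) = 2*(4:ℝ)^k := by push_cast; ring
  rw [hcast4] at habs1 habs3
  rw [hcast42] at habs2
  -- |s - s'| < N
  have hbig : 4 * ((4:ℝ)^k * (4:ℝ)^k) < N := by
    have hW2 := nf2
    have : (4:ℝ)^k * (4:ℝ)^k - 4^k < ((2 * 4^k + 4^(8*k) : ℕ) : ℝ) := nf3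
    nlinarith [nf4]
  have hss : |s - s'| < N := by
    have h1 := abs_sub_abs_le_abs_sub s s'
    have h2 : |s| ≤ |ylift N a m (m + 2*4^k)| + |ylift N a m (m + 4^k)| := abs_sub _ _
    have h3 : |s - s'| ≤ |s| + |s'| := abs_sub _ _
    nlinarith [nf4]
  have hseq : s = s' := rep_unique N hcoe hss
  constructor
  · intro h0
    have hpos := (hw.1 h0)
    have hspos : (4:ℝ)^k ≤ s := by rw [hsdef]; linarith [hpos.1, hpos.2]
    by_contra hneg
    push_neg at hneg
    have := (hw'.2 hneg)
    have hsneg : s' ≤ -(4:ℝ)^k := by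
      rw [hsdef']
      have hself := ylift_self N a (m + 4^k)
      linarith [this.1]
    rw [hseq] at hspos
    linarith [nf4]
  · intro h0
    by_contra hneg
    push_neg at hneg
    have hB := (hw.2 hneg)
    have hsneg : s ≤ -(4:ℝ)^k := by rw [hsdef]; linarith [hB.2]
    have hA := (hw'.1 h0)
    have hspos : (4:ℝ)^k ≤ s' := by
      rw [hsdef']
      linarith [hA.1]
    rw [hseq] at hsneg
    linarith [nf4]


/-- Let `k ≥ 1` and `N ≥ 4^{10(k+1)}`.  Let `a_0, …, a_Q` be points of
the circle `ℝ/Nℤ` (with its arc-length metric) such that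
`(r' − r) ≤ dist (a_r) (a_{r'}) ≤ 4^k·(r' − r)` whenever `r < r'` and `r' − r ≤ N/16`.
Set `b r = a (r·4^k)`.  Then the points `b r` are placed on the circle in their natural
cyclic order: there is an orientation of the circle (`ε : Bool`, realized by possibly
negating all points) such that for every `r` with `(r+2)·4^k + 4^{8k} ≤ Q` the point
`b (r+1)` lies on the positively oriented arc from `b r` to `b (r+2)` (measured via the
representative in `[0, N)` of the difference from `b r`). -/
theorem equally_spaced_points_in_cyclic_order
    (k : ℕ) (hk : 1 ≤ k) (N : ℝ) [Fact (0 < N)] (hN : (4 : ℝ) ^ (10 * (k + 1)) ≤ N)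
    (Q : ℕ) (a : ℕ → AddCircle N)
    (ha : ∀ r r' : ℕ, r < r' → r' ≤ Q → ((r' - r : ℕ) : ℝ) ≤ N / 16 →
      ((r' - r : ℕ) : ℝ) ≤ dist (a r) (a r') ∧
      dist (a r) (a r') ≤ 4 ^ k * ((r' - r : ℕ) : ℝ)) :
    ∃ ε : Bool,
      ∀ r : ℕ, (r + 2) * 4 ^ k + 4 ^ (8 * k) ≤ Q →
        ((AddCircle.equivIco N 0
            ((cond ε (a ((r + 1) * 4 ^ k)) (-(a ((r + 1) * 4 ^ k)))) -
             (cond ε (a (r * 4 ^ k)) (-(a (r * 4 ^ k)))))) : ℝ) ≤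
        ((AddCircle.equivIco N 0
            ((cond ε (a ((r + 2) * 4 ^ k)) (-(a ((r + 2) * 4 ^ k)))) -
             (cond ε (a (r * 4 ^ k)) (-(a (r * 4 ^ k)))))) : ℝ) := by
  have hN0 : (0:ℝ) < N := Fact.out
  obtain ⟨nf1, nf2, nf3, nf4⟩ := numfacts k hk N hN
  have hk4 : 0 < 4^k := Nat.pow_pos (by norm_num)
  have h8k : 0 < 4^(8*k) := Nat.pow_pos (by norm_num)
  have hR : ∀ r : ℕ, (r + 2) * 4^k + 4^(8*k) ≤ Q → r*4^k + (2*4^k + 4^(8*k)) ≤ Q := by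
    intro r hr
    calc r*4^k + (2*4^k + 4^(8*k)) = (r+2)*4^k + 4^(8*k) := by ring
      _ ≤ Q := hr
  have hconst : ∀ r : ℕ, (r + 2) * 4^k + 4^(8*k) ≤ Q →
      ((0 ≤ ylift N a (r*4^k) (r*4^k + (2*4^k + 4^(8*k)))) ↔
       (0 ≤ ylift N a (0*4^k) (0*4^k + (2*4^k + 4^(8*k))))) := by
    intro r
    induction r with
    | zero => intro _; exact Iff.rfl
    | succ n ih =>
      intro hr
      have hrn : (n + 2) * 4^k + 4^(8*k) ≤ Q := by
        have h1 : (n+2) ≤ (n+3) := by omega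
        have h2 : (n+2)*4^k ≤ (n+3)*4^k := Nat.mul_le_mul_right _ h1
        have h3 : (n+1+2) = (n+3) := by omega
        rw [h3] at hr
        omega
      have hm' : ((n*4^k) + 4^k) + (2 * 4^k + 4^(8*k)) ≤ Q := by
        calc ((n*4^k) + 4^k) + (2 * 4^k + 4^(8*k)) = (n+1+2)*4^k + 4^(8*k) := by ring
          _ ≤ Q := hr
      have hcons := consistency k hk N hN Q a ha (n*4^k) hm'
      have e : (n+1)*4^k = n*4^k + 4^k := by ring
      rw [e]
      exact hcons.symm.trans (ih hrn)
  by_cases hsig : 0 ≤ ylift N a (0*4^k) (0*4^k + (2*4^k + 4^(8*k)))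
  · refine ⟨true, ?_⟩
    intro r hr
    have hσr : 0 ≤ ylift N a (r*4^k) (r*4^k + (2*4^k + 4^(8*k))) := (hconst r hr).2 hsig
    have hw := (window k hk N hN Q a ha (r*4^k) (hR r hr)).1 hσr
    obtain ⟨hy1, hy12⟩ := hw
    simp only [Bool.cond_true]
    have e1 : (r+1)*4^k = r*4^k + 4^k := by ring
    have e2 : (r+2)*4^k = r*4^k + 2*4^k := by ring
    rw [e1, e2]
    have hcoe1 : a (r*4^k + 4^k) - a (r*4^k)
        = ((ylift N a (r*4^k) (r*4^k + 4^k) : ℝ) : AddCircle N) :=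
      (ylift_coe N a _ _).symm
    have hcoe2 : a (r*4^k + 2*4^k) - a (r*4^k)
        = ((ylift N a (r*4^k) (r*4^k + 2*4^k) : ℝ) : AddCircle N) :=
      (ylift_coe N a _ _).symm
    rw [hcoe1, hcoe2]
    have hb1 := ylift_abs_le N a (r*4^k) (r*4^k + 4^k)
    have hb2 := ylift_abs_le N a (r*4^k) (r*4^k + 2*4^k)
    rw [equivIco_coe_of_mem N (by linarith) (by cases abs_le.1 hb1; linarith),
        equivIco_coe_of_mem N (by linarith) (by cases abs_le.1 hb2; linarith)]
    linarith
  · refine ⟨false, ?_⟩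
    intro r hr
    have hσr : ¬ (0 ≤ ylift N a (r*4^k) (r*4^k + (2*4^k + 4^(8*k)))) :=
      fun h => hsig ((hconst r hr).1 h)
    have hw := (window k hk N hN Q a ha (r*4^k) (hR r hr)).2 (not_le.1 hσr)
    obtain ⟨hy1, hy12⟩ := hw
    simp only [Bool.cond_false]
    have e1 : (r+1)*4^k = r*4^k + 4^k := by ring
    have e2 : (r+2)*4^k = r*4^k + 2*4^k := by ring
    rw [e1, e2]
    have hcoe1 : -(a (r*4^k + 4^k)) - -(a (r*4^k))
        = (((-(ylift N a (r*4^k) (r*4^k + 4^k)) : ℝ)) : AddCircle N) := by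
      rw [AddCircle.coe_neg, ylift_coe]
      abel
    have hcoe2 : -(a (r*4^k + 2*4^k)) - -(a (r*4^k))
        = (((-(ylift N a (r*4^k) (r*4^k + 2*4^k)) : ℝ)) : AddCircle N) := by
      rw [AddCircle.coe_neg, ylift_coe]
      abel
    rw [hcoe1, hcoe2]
    have hb1 := ylift_abs_le N a (r*4^k) (r*4^k + 4^k)
    have hb2 := ylift_abs_le N a (r*4^k) (r*4^k + 2*4^k)
    rw [equivIco_coe_of_mem N (by linarith) (by cases abs_le.1 hb1; linarith),
        equivIco_coe_of_mem N (by linarith) (by cases abs_le.1 hb2; linarith)]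
    linarith
end

section
/- Let S be a subdiamond of the unweighted diamond graph D_n of height 2^t with t ≥ 3, and let S_1, S_2, S_3, S_4 be subdiamonds properly contained in S that are pairwise vertex-disjoint and such that none of them contains the top or the bottom of S. Then at least two of S_1, S_2, S_3, S_4 have diameter at most diam(S)/8 (equivalently, height at most 2^{t−3}). -/
/-- The set of edges of `D_{k+j}` of the subdiamond that evolved from the edge `e`
of `D_k`. -/
def subdiaEdges : (k j : ℕ) → (diamond k).E → Set ((diamond (k + j)).E)
  | _, 0, e => {e}
  | k, j + 1, e => {p : (diamond (k + j)).E × Fin 4 | p.1 ∈ subdiaEdges k j e}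

/-- The natural inclusion of the vertices of `D_k` into the vertices of `D_{k+j}`. -/
def inclV : (k j : ℕ) → (diamond k).V → (diamond (k + j)).V
  | _, 0, v => v
  | k, j + 1, v => Sum.inl (inclV k j v)

/-- A subdiamond of `D_n`: the subgraph of `D_n` that evolved from the edge `e` of `D_k`
(for some `k + j = n`); its height is `2^j`. -/
structure Subdia (n : ℕ) where
  k : ℕ
  j : ℕ
  hkj : k + j = n
  e : (diamond k).E

/-- The edge set of a subdiamond of `D_n`. -/
def Subdia.edges {n : ℕ} (S : Subdia n) : Set ((diamond n).E) :=
  cast (congrArg (fun m => Set ((diamond m).E)) S.hkj) (subdiaEdges S.k S.j S.e)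

/-- The vertex set of a subdiamond of `D_n`: the endpoints of its edges. -/
def Subdia.verts {n : ℕ} (S : Subdia n) : Set ((diamond n).V) :=
  {v | ∃ e' ∈ S.edges, (diamond n).src e' = v ∨ (diamond n).tgt e' = v}

/-- The top vertex of a subdiamond of `D_n`. -/
def Subdia.top {n : ℕ} (S : Subdia n) : (diamond n).V :=
  cast (congrArg (fun m => (diamond m).V) S.hkj) (inclV S.k S.j ((diamond S.k).tgt S.e))

/-- The bottom vertex of a subdiamond of `D_n`. -/
def Subdia.bot {n : ℕ} (S : Subdia n) : (diamond n).V :=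
  cast (congrArg (fun m => (diamond m).V) S.hkj) (inclV S.k S.j ((diamond S.k).src S.e))

namespace DiamondPf

abbrev dV (m : ℕ) := (diamond m).V
abbrev dE (m : ℕ) := (diamond m).E

def castV {a b : ℕ} (h : a = b) (v : dV a) : dV b := cast (congrArg dV h) v
def castE {a b : ℕ} (h : a = b) (f : dE a) : dE b := cast (congrArg dE h) f

lemma castE_castE {a b c : ℕ} (h1 : a = b) (h2 : b = c) (f : dE a) :
    castE h2 (castE h1 f) = castE (h1.trans h2) f := by subst h1; subst h2; rfl

lemma castV_castV {a b c : ℕ} (h1 : a = b) (h2 : b = c) (v : dV a) :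
    castV h2 (castV h1 v) = castV (h1.trans h2) v := by subst h1; subst h2; rfl

lemma castE_symm_castE {a b : ℕ} (h : a = b) (f : dE a) : castE h.symm (castE h f) = f := by
  subst h; rfl

lemma src_castE {a b : ℕ} (h : a = b) (f : dE a) :
    (diamond b).src (castE h f) = castV h ((diamond a).src f) := by subst h; rfl

lemma tgt_castE {a b : ℕ} (h : a = b) (f : dE a) :
    (diamond b).tgt (castE h f) = castV h ((diamond a).tgt f) := by subst h; rfl

lemma castE_fst {a b : ℕ} (h : a = b) (h1 : a + 1 = b + 1) (f : dE (a + 1)) :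
    (castE h1 f).1 = castE h f.1 := by subst h; rfl

lemma castV_inl {a b : ℕ} (h : a = b) (h1 : a + 1 = b + 1) (v : dV a) :
    castV h1 (Sum.inl v : dV (a + 1)) = Sum.inl (castV h v) := by subst h; rfl

def proj (k : ℕ) : (j : ℕ) → dE (k + j) → dE k
  | 0, f => f
  | j + 1, f => proj k j f.1

def ext (c : Fin 4) (k : ℕ) : (j : ℕ) → dE k → dE (k + j)
  | 0, f => f
  | j + 1, f => (ext c k j f, c)

lemma proj_ext (c : Fin 4) (k : ℕ) : ∀ (j : ℕ) (f : dE k), proj k j (ext c k j f) = f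
  | 0, _ => rfl
  | j + 1, f => proj_ext c k j f

lemma mem_subdiaEdges (k : ℕ) : ∀ (j : ℕ) (e : dE k) (f : dE (k + j)),
    f ∈ subdiaEdges k j e ↔ proj k j f = e
  | 0, _, _ => Iff.rfl
  | j + 1, e, f => mem_subdiaEdges k j e f.1

lemma src_ext (k : ℕ) : ∀ (j : ℕ) (e : dE k),
    (diamond (k + j)).src (ext 0 k j e) = inclV k j ((diamond k).src e)
  | 0, _ => rfl
  | j + 1, e => by
      show Sum.inl ((diamond (k + j)).src (ext 0 k j e)) = Sum.inl (inclV k j ((diamond k).src e))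
      rw [src_ext k j e]

lemma tgt_ext (k : ℕ) : ∀ (j : ℕ) (e : dE k),
    (diamond (k + j)).tgt (ext 1 k j e) = inclV k j ((diamond k).tgt e)
  | 0, _ => rfl
  | j + 1, e => by
      show Sum.inl ((diamond (k + j)).tgt (ext 1 k j e)) = Sum.inl (inclV k j ((diamond k).tgt e))
      rw [tgt_ext k j e]

lemma mem_cast_edges {a b : ℕ} (h : a = b) (A : Set (dE a)) (f : dE b) :
    f ∈ cast (congrArg (fun m => Set ((diamond m).E)) h) A ↔ castE h.symm f ∈ A := by
  subst h; exact Iff.rfl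

lemma castV_inclV_inl (k : ℕ) : ∀ (j : ℕ) (h : (k + 1) + j = k + (j + 1)) (v : dV k),
    castV h (inclV (k + 1) j (Sum.inl v)) = inclV k (j + 1) v
  | 0, _, _ => rfl
  | j + 1, h, v => by
      have h0 : (k + 1) + j = k + (j + 1) := by omega
      show castV h (Sum.inl (inclV (k + 1) j (Sum.inl v))) = Sum.inl (inclV k (j + 1) v)
      rw [castV_inl h0 h, castV_inclV_inl k j h0 v]

lemma proj_castE {a b : ℕ} (h : a = b) (j : ℕ) (hj : a + j = b + j) (f : dE (a + j)) :
    proj b j (castE hj f) = castE h (proj a j f) := by subst h; rfl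

lemma proj_proj (a b : ℕ) : ∀ (c : ℕ) (h : a + b + c = a + (b + c)) (f : dE (a + b + c)),
    proj a (b + c) (castE h f) = proj a b (proj (a + b) c f)
  | 0, _, _ => rfl
  | c + 1, h, f => by
      have h0 : a + b + c = a + (b + c) := by omega
      show proj a (b + c) ((castE h f).1) = proj a b (proj (a + b) c f.1)
      rw [castE_fst h0 h f, proj_proj a b c h0 f.1]



lemma bot_mem_verts {n : ℕ} (T : Subdia n) : T.bot ∈ T.verts := by
  obtain ⟨k, j, hkj, e⟩ := T
  subst hkj
  exact ⟨ext 0 k j e, (mem_subdiaEdges k j e _).2 (proj_ext 0 k j e), Or.inl (src_ext k j e)⟩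

lemma top_mem_verts {n : ℕ} (T : Subdia n) : T.top ∈ T.verts := by
  obtain ⟨k, j, hkj, e⟩ := T
  subst hkj
  exact ⟨ext 1 k j e, (mem_subdiaEdges k j e _).2 (proj_ext 1 k j e), Or.inr (tgt_ext k j e)⟩

lemma bot_vert {n : ℕ} (T : Subdia n) (v : dV n) (h : T.bot = v) : v ∈ T.verts :=
  h ▸ bot_mem_verts T

lemma top_vert {n : ℕ} (T : Subdia n) (v : dV n) (h : T.top = v) : v ∈ T.verts :=
  h ▸ top_mem_verts T

lemma subset_struct {k t k' j' : ℕ} (h' : k' + j' = k + t) (e : dE k) (e' : dE k')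
    (hsub : ∀ f : dE (k + t), proj k' j' (castE h'.symm f) = e' → proj k t f = e) :
    ∃ d, ∃ hk : k + d = k', t = d + j' ∧ proj k d (castE hk.symm e') = e := by
  have hkk : k ≤ k' := by
    by_contra hlt
    push_neg at hlt
    obtain ⟨c, rfl⟩ : ∃ c, k = k' + (c + 1) := ⟨k - k' - 1, by omega⟩
    have hj : j' = (c + 1) + t := by omega
    subst hj
    have key : ∀ i : Fin 4,
        proj (k' + (c + 1)) t (ext 0 (k' + (c + 1)) t ((ext 0 k' c e', i))) = e := by
      intro i
      apply hsub
      rw [proj_proj k' (c + 1) t h'.symm]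
      rw [proj_ext 0 (k' + (c + 1)) t ((ext 0 k' c e', i))]
      exact proj_ext 0 k' c e'
    have h01 := key 0
    have h11 := key 1
    replace h01 := (proj_ext 0 (k' + (c + 1)) t _).symm.trans h01
    replace h11 := (proj_ext 0 (k' + (c + 1)) t _).symm.trans h11
    have : (0 : Fin 4) = 1 := congrArg Prod.snd (h01.trans h11.symm)
    simp at this
  obtain ⟨d, hk⟩ : ∃ d, k + d = k' := ⟨k' - k, by omega⟩
  have ht : t = d + j' := by omega
  subst ht
  refine ⟨d, hk, rfl, ?_⟩
  have hH : (k + d) + j' = k + (d + j') := by omega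
  have hmem : proj k' j' (castE h'.symm (castE hH (ext 0 (k + d) j' (castE hk.symm e')))) = e' := by
    rw [castE_castE]
    rw [proj_castE hk j' (hH.trans h'.symm)]
    rw [proj_ext]
    rw [castE_castE]
    rfl
  have hres := hsub _ hmem
  rw [proj_proj k d j' hH] at hres
  rw [proj_ext] at hres
  exact hres

def Mvert (k t' : ℕ) (h : 1 ≤ t') (e : dE k) (b : Bool) : dV (k + t') :=
  castV (by omega) (inclV (k + 1) (t' - 1) (Sum.inr (e, b)))



lemma claim1 (k t' : ℕ) (ht3 : 3 ≤ t') (e : dE k) (T : Subdia (k + t'))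
    (hsub : T.edges ⊂ (Subdia.mk k t' rfl e).edges)
    (htop : (Subdia.mk k t' rfl e).top ∉ T.verts)
    (hbot : (Subdia.mk k t' rfl e).bot ∉ T.verts) :
    T.j + 3 ≤ t' ∨ ∃ b : Bool, Mvert k t' (by omega) e b ∈ T.verts := by
  obtain ⟨k', j', h', e'⟩ := T
  have hss : ∀ f : dE (k + t'), proj k' j' (castE h'.symm f) = e' → proj k t' f = e := by
    intro f hf
    have h1 : f ∈ (Subdia.mk k' j' h' e').edges := by
      show f ∈ cast (congrArg (fun m => Set ((diamond m).E)) h') (subdiaEdges k' j' e')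
      rw [mem_cast_edges h']
      exact (mem_subdiaEdges _ _ _ _).2 hf
    have h2 : f ∈ subdiaEdges k t' e := hsub.1 h1
    exact (mem_subdiaEdges _ _ _ _).1 h2
  obtain ⟨d, hk, ht, pd⟩ := subset_struct h' e e' hss
  by_cases hd3 : 3 ≤ d
  · left; show j' + 3 ≤ t'; omega
  · have hd3' : d < 3 := by omega
    interval_cases d
    · -- d = 0 : edges are equal, contradiction with proper containment
      exfalso
      subst hk
      have hj : j' = t' := by omega
      subst hj
      have pd' : e' = e := pd
      apply hsub.2
      intro f hf
      show f ∈ cast (congrArg (fun m => Set ((diamond m).E)) h') (subdiaEdges (k + 0) j' e')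
      rw [mem_cast_edges h', mem_subdiaEdges, pd']
      exact (mem_subdiaEdges k j' e f).1 hf
    · -- d = 1 : the subdiamond is a child, contains top or bottom of S
      exfalso
      subst hk
      have hj : t' = j' + 1 := by omega
      subst hj
      have pd' : e'.1 = e := pd
      obtain ⟨e1, c⟩ := e'
      have pe : e1 = e := pd'
      subst pe
      fin_cases c
      · exact hbot (bot_vert _ _ (castV_inclV_inl k j' h' ((diamond k).src e1)))
      · exact htop (top_vert _ _ (castV_inclV_inl k j' h' ((diamond k).tgt e1)))
      · exact hbot (bot_vert _ _ (castV_inclV_inl k j' h' ((diamond k).src e1)))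
      · exact htop (top_vert _ _ (castV_inclV_inl k j' h' ((diamond k).tgt e1)))
    · -- d = 2 : grandchild; contains top/bottom of S or a middle vertex
      subst hk
      have hj : t' = j' + 2 := by omega
      subst hj
      have pd' : e'.1.1 = e := pd
      obtain ⟨⟨e1, c⟩, c'⟩ := e'
      have pe : e1 = e := pd'
      subst pe
      have hA : (k + 2) + j' = (k + 1) + (j' + 1) := by omega
      have hB : (k + 1) + (j' + 1) = k + (j' + 2) := by omega
      have key : ∀ w : dV (k + 1), castV h' (inclV (k + 2) j' (Sum.inl w)) =
          castV hB (inclV (k + 1) (j' + 1) w) := by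
        intro w
        rw [← castV_inclV_inl (k + 1) j' hA w, castV_castV]
      fin_cases c <;> fin_cases c'
      · exact (hbot (bot_vert _ _ ((key (Sum.inl ((diamond k).src e1))).trans
          (castV_inclV_inl k (j' + 1) hB ((diamond k).src e1))))).elim
      · exact Or.inr ⟨false, top_vert _ _ (key (Sum.inr (e1, false)))⟩
      · exact (hbot (bot_vert _ _ ((key (Sum.inl ((diamond k).src e1))).trans
          (castV_inclV_inl k (j' + 1) hB ((diamond k).src e1))))).elim
      · exact Or.inr ⟨false, top_vert _ _ (key (Sum.inr (e1, false)))⟩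
      · exact Or.inr ⟨false, bot_vert _ _ (key (Sum.inr (e1, false)))⟩
      · exact (htop (top_vert _ _ ((key (Sum.inl ((diamond k).tgt e1))).trans
          (castV_inclV_inl k (j' + 1) hB ((diamond k).tgt e1))))).elim
      · exact Or.inr ⟨false, bot_vert _ _ (key (Sum.inr (e1, false)))⟩
      · exact (htop (top_vert _ _ ((key (Sum.inl ((diamond k).tgt e1))).trans
          (castV_inclV_inl k (j' + 1) hB ((diamond k).tgt e1))))).elim
      · exact (hbot (bot_vert _ _ ((key (Sum.inl ((diamond k).src e1))).trans
          (castV_inclV_inl k (j' + 1) hB ((diamond k).src e1))))).elim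
      · exact Or.inr ⟨true, top_vert _ _ (key (Sum.inr (e1, true)))⟩
      · exact (hbot (bot_vert _ _ ((key (Sum.inl ((diamond k).src e1))).trans
          (castV_inclV_inl k (j' + 1) hB ((diamond k).src e1))))).elim
      · exact Or.inr ⟨true, top_vert _ _ (key (Sum.inr (e1, true)))⟩
      · exact Or.inr ⟨true, bot_vert _ _ (key (Sum.inr (e1, true)))⟩
      · exact (htop (top_vert _ _ ((key (Sum.inl ((diamond k).tgt e1))).trans
          (castV_inclV_inl k (j' + 1) hB ((diamond k).tgt e1))))).elim
      · exact Or.inr ⟨true, bot_vert _ _ (key (Sum.inr (e1, true)))⟩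
      · exact (htop (top_vert _ _ ((key (Sum.inl ((diamond k).tgt e1))).trans
          (castV_inclV_inl k (j' + 1) hB ((diamond k).tgt e1))))).elim


theorem main (n t : ℕ) (ht : 3 ≤ t) (S : Subdia n) (hS : S.j = t)
    (T : Fin 4 → Subdia n)
    (hsub : ∀ i, (T i).edges ⊂ S.edges)
    (hdisj : ∀ i i', i ≠ i' → (T i).verts ∩ (T i').verts = ∅)
    (htop : ∀ i, S.top ∉ (T i).verts)
    (hbot : ∀ i, S.bot ∉ (T i).verts) :
    ∃ i i' : Fin 4, i ≠ i' ∧ (T i).j + 3 ≤ t ∧ (T i').j + 3 ≤ t := by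
  obtain ⟨k, t', hkj, e⟩ := S
  have ht' : t' = t := hS
  subst ht'
  subst hkj
  have ht3 : 3 ≤ t' := ht
  have h1t : 1 ≤ t' := by omega
  have HC : ∀ i, (T i).j + 3 ≤ t' ∨ ∃ b : Bool, Mvert k t' h1t e b ∈ (T i).verts := by
    intro i
    exact claim1 k t' ht3 e (T i) (hsub i) (htop i) (hbot i)
  classical
  have hbf : ∀ i, ¬((T i).j + 3 ≤ t') →
      ∃ b : Bool, Mvert k t' h1t e b ∈ (T i).verts :=
    fun i hi => (HC i).resolve_left hi
  set bf : Fin 4 → Bool := fun i =>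
    if h : ∃ b : Bool, Mvert k t' h1t e b ∈ (T i).verts then h.choose else true with hbfdef
  have hbf2 : ∀ i, ¬((T i).j + 3 ≤ t') → Mvert k t' h1t e (bf i) ∈ (T i).verts := by
    intro i hi
    have hex := hbf i hi
    simp only [hbfdef, dif_pos hex]
    exact hex.choose_spec
  have hinj : Set.InjOn bf ↑(Finset.univ.filter (fun i => ¬((T i).j + 3 ≤ t'))) := by
    intro i hi i' hi' hbb
    by_contra hne
    have d1 := hbf2 i (by simpa using hi)
    have d2 := hbf2 i' (by simpa using hi')
    rw [hbb] at d1
    have hd := hdisj i i' hne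
    have : Mvert k t' h1t e (bf i') ∈ (T i).verts ∩ (T i').verts := ⟨d1, d2⟩
    rw [hd] at this
    exact this
  have hcard2 : (Finset.univ.filter (fun i => ¬((T i).j + 3 ≤ t'))).card ≤ 2 := by
    have h2 := Finset.card_le_card_of_injOn bf (fun a _ => Finset.mem_univ (bf a)) hinj
    simpa using h2
  have htot := Finset.card_filter_add_card_filter_not
    (s := (Finset.univ : Finset (Fin 4))) (p := fun i => (T i).j + 3 ≤ t')
  have hcard : 1 < (Finset.univ.filter (fun i => (T i).j + 3 ≤ t')).card := by
    simp only [Finset.card_univ, Fintype.card_fin] at htot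
    omega
  obtain ⟨a, ha, b, hb, hab⟩ := Finset.one_lt_card.mp hcard
  exact ⟨a, b, hab, (Finset.mem_filter.mp ha).2, (Finset.mem_filter.mp hb).2⟩

end DiamondPf


/-- Let `S` be a subdiamond of `D_n` of height `2^t` with `t ≥ 3`, and
let `S_1, S_2, S_3, S_4` be subdiamonds properly contained in `S`, pairwise vertex
disjoint, none of which contains the top or the bottom of `S`.  Then at least two of them
have height at most `2^{t−3}` (equivalently, diameter at most `diam S / 8`). -/
theorem two_subdiamonds_are_small (n t : ℕ) (ht : 3 ≤ t) (S : Subdia n) (hS : S.j = t)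
    (T : Fin 4 → Subdia n)
    (hsub : ∀ i, (T i).edges ⊂ S.edges)
    (hdisj : ∀ i i', i ≠ i' → (T i).verts ∩ (T i').verts = ∅)
    (htop : ∀ i, S.top ∉ (T i).verts)
    (hbot : ∀ i, S.bot ∉ (T i).verts) :
    ∃ i i' : Fin 4, i ≠ i' ∧ (T i).j + 3 ≤ t ∧ (T i').j + 3 ≤ t :=
  DiamondPf.main n t ht S hS T hsub hdisj htop hbot
end
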